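/- arXiv:0710.3871 — 11 statements merged into one kernel-verified Lean document; each statement's English description precedes it below -/
import Mathlib

section
/- Let A be a metabelian Lie algebra over a field k and let I₁ and I₂ be Lie ideals of A that are nilpotent of nilpotency classes n₁ and n₂ respectively (i.e. the lower central series of Iⱼ, viewed as a Lie algebra, vanishes at step nⱼ). Then the Lie ideal I₁ ⊔ I₂ generated by I₁ and I₂ is nilpotent, of nilpotency class at most 2·max(n₁, n₂). -/
/-- A Lie ring `A` is *metabelian* if `⁅⁅a,b⁆,⁅c,d⁆⁆ = 0` for all `a b c d`. -/
def IsMetabelian (A : Type*) [LieRing A] : Prop :=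
  ∀ a b c d : A, ⁅⁅a, b⁆, ⁅c, d⁆⁆ = 0

section Aux

variable {k A : Type*} [Field k] [LieRing A] [LieAlgebra k A]

/-- Iterated bracket series of an ideal, inside the ambient algebra:
`DD I 0 = I`, `DD I (n+1) = ⁅I, DD I n⁆`. -/
def DD (I : LieIdeal k A) : ℕ → LieIdeal k A :=
  fun n => (fun N => ⁅I, N⁆)^[n] I

lemma DD_zero (I : LieIdeal k A) : DD I 0 = I := rfl

lemma DD_succ (I : LieIdeal k A) (n : ℕ) : DD I (n + 1) = ⁅I, DD I n⁆ :=
  Function.iterate_succ_apply' _ _ _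

/-- The intrinsic lower central series of an ideal maps onto `DD`. -/
lemma map_lcs (I : LieIdeal k A) (n : ℕ) :
    LieSubmodule.map (LieSubmodule.incl (I : LieSubmodule k A A)) (LieIdeal.lcs I ↥I n)
      = DD I n := by
  induction n with
  | zero => rw [LieIdeal.lcs_zero, LieSubmodule.map_incl_top, DD_zero]
  | succ n ih => rw [LieIdeal.lcs_succ, LieSubmodule.map_bracket_eq, ih, DD_succ]

lemma DD_eq_bot (I : LieIdeal k A) {n m : ℕ} (h : DD I n = ⊥) (hnm : n ≤ m) :
    DD I m = ⊥ := by
  obtain ⟨c, rfl⟩ := Nat.exists_eq_add_of_le hnm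
  clear hnm
  induction c with
  | zero => exact h
  | succ c ih =>
      rw [show n + (c + 1) = n + c + 1 from rfl, DD_succ, ih, LieSubmodule.lie_bot]

/-- `G I p` : span of brackets of `p` elements of `I` (with `G I 0 = ⊤`). -/
def G (I : LieIdeal k A) : ℕ → LieIdeal k A
  | 0 => ⊤
  | p + 1 => DD I p

lemma G_zero (I : LieIdeal k A) : G I 0 = ⊤ := rfl

lemma G_succ (I : LieIdeal k A) (p : ℕ) : G I (p + 1) = DD I p := rfl

lemma lie_G_self (I : LieIdeal k A) (p : ℕ) : ⁅I, G I p⁆ ≤ G I (p + 1) := by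
  cases p with
  | zero =>
      rw [G_zero, G_succ, DD_zero]
      exact LieSubmodule.lie_le_left I ⊤
  | succ p => rw [G_succ, G_succ, DD_succ]

lemma lie_G_other (I J : LieIdeal k A) (p : ℕ) : ⁅J, G I p⁆ ≤ G I p := by
  cases p with
  | zero => exact le_top
  | succ p =>
      rw [G_succ]
      exact LieSubmodule.lie_le_right (DD I p) J

lemma lie_finsetSup (I : LieIdeal k A) (s : Finset ℕ) (f : ℕ → LieIdeal k A) :
    ⁅I, s.sup f⁆ ≤ s.sup fun a => ⁅I, f a⁆ := by
  classical
  induction s using Finset.induction with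
  | empty => simp [LieSubmodule.lie_bot]
  | insert _ _ hx ih =>
      rw [Finset.sup_insert, Finset.sup_insert, LieSubmodule.lie_sup]
      exact sup_le_sup le_rfl ih

/-- Fitting-style estimate for the bracket series of a sup of two ideals. -/
lemma DD_sup_le (I₁ I₂ : LieIdeal k A) (m : ℕ) :
    DD (I₁ ⊔ I₂) m ≤
      (Finset.range (m + 2)).sup fun p => G I₁ p ⊓ G I₂ (m + 1 - p) := by
  induction m with
  | zero =>
      rw [DD_zero]
      apply sup_le
      · refine le_trans ?_ (Finset.le_sup (Finset.mem_range.mpr (by norm_num : (1:ℕ) < 2)))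
        exact le_inf le_rfl le_top
      · refine le_trans ?_ (Finset.le_sup (Finset.mem_range.mpr (by norm_num : (0:ℕ) < 2)))
        exact le_inf le_top le_rfl
  | succ m ih =>
      rw [DD_succ]
      refine le_trans (LieSubmodule.mono_lie_right _ ih) ?_
      rw [LieSubmodule.sup_lie]
      apply sup_le
      · refine le_trans (lie_finsetSup _ _ _) ?_
        apply Finset.sup_le
        intro p hp
        rw [Finset.mem_range] at hp
        refine le_trans ?_ (Finset.le_sup (f := fun p => G I₁ p ⊓ G I₂ (m + 2 - p))
          (Finset.mem_range.mpr (by omega : p + 1 < m + 3)))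
        have h1 : ⁅I₁, G I₁ p ⊓ G I₂ (m + 1 - p)⁆ ≤ G I₁ (p + 1) :=
          le_trans (LieSubmodule.mono_lie_right _ inf_le_left) (lie_G_self I₁ p)
        have h2 : ⁅I₁, G I₁ p ⊓ G I₂ (m + 1 - p)⁆ ≤ G I₂ (m + 1 - p) :=
          le_trans (LieSubmodule.mono_lie_right _ inf_le_right) (lie_G_other I₂ I₁ _)
        have he : m + 2 - (p + 1) = m + 1 - p := by omega
        show ⁅I₁, G I₁ p ⊓ G I₂ (m + 1 - p)⁆ ≤ G I₁ (p + 1) ⊓ G I₂ (m + 2 - (p + 1))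
        rw [he]
        exact le_inf h1 h2
      · refine le_trans (lie_finsetSup _ _ _) ?_
        apply Finset.sup_le
        intro p hp
        rw [Finset.mem_range] at hp
        refine le_trans ?_ (Finset.le_sup (f := fun p => G I₁ p ⊓ G I₂ (m + 2 - p))
          (Finset.mem_range.mpr (by omega : p < m + 3)))
        have h1 : ⁅I₂, G I₁ p ⊓ G I₂ (m + 1 - p)⁆ ≤ G I₁ p :=
          le_trans (LieSubmodule.mono_lie_right _ inf_le_left) (lie_G_other I₁ I₂ _)
        have h2 : ⁅I₂, G I₁ p ⊓ G I₂ (m + 1 - p)⁆ ≤ G I₂ (m + 1 - p + 1) :=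
          le_trans (LieSubmodule.mono_lie_right _ inf_le_right) (lie_G_self I₂ _)
        have he : m + 2 - p = m + 1 - p + 1 := by omega
        show ⁅I₂, G I₁ p ⊓ G I₂ (m + 1 - p)⁆ ≤ G I₁ p ⊓ G I₂ (m + 2 - p)
        rw [he]
        exact le_inf h1 h2

end Aux

/-- In a metabelian Lie algebra, the Lie ideal generated by two nilpotent Lie ideals of
nilpotency classes `n₁` and `n₂` is nilpotent of class at most `2 * max n₁ n₂`. -/
theorem sup_nilpotent_of_nilpotent {k A : Type*} [Field k] [LieRing A] [LieAlgebra k A]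
    (hA : IsMetabelian A) (I₁ I₂ : LieIdeal k A) (n₁ n₂ : ℕ)
    (h₁ : LieModule.lowerCentralSeries k ↥I₁ ↥I₁ n₁ = ⊥)
    (h₂ : LieModule.lowerCentralSeries k ↥I₂ ↥I₂ n₂ = ⊥) :
    LieModule.lowerCentralSeries k ↥(I₁ ⊔ I₂) ↥(I₁ ⊔ I₂) (2 * max n₁ n₂) = ⊥ := by
  set N := max n₁ n₂ with hN
  -- translate hypotheses
  have key : ∀ (I : LieIdeal k A) (n : ℕ),
      LieModule.lowerCentralSeries k ↥I ↥I n = ⊥ ↔ DD I n = ⊥ := by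
    intro I n
    have hcoe : LieIdeal.lcs I ↥I n = ⊥ ↔ LieModule.lowerCentralSeries k ↥I ↥I n = ⊥ := by
      rw [← LieSubmodule.toSubmodule_inj, ← LieSubmodule.toSubmodule_inj,
        LieIdeal.coe_lcs_eq, LieSubmodule.bot_toSubmodule, LieSubmodule.bot_toSubmodule]
    rw [← hcoe, ← map_lcs I n]
    constructor
    · intro h; rw [h, LieSubmodule.map_bot]
    · intro h
      rw [eq_bot_iff]
      intro x hx
      have hmem : (LieSubmodule.incl (I : LieSubmodule k A A)) x
          ∈ LieSubmodule.map (LieSubmodule.incl (I : LieSubmodule k A A))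
              (LieIdeal.lcs I ↥I n) := LieSubmodule.mem_map_of_mem hx
      rw [h, LieSubmodule.mem_bot] at hmem
      have : x = 0 := by
        apply LieSubmodule.injective_incl (I : LieSubmodule k A A)
        simpa using hmem
      simp [this]
  rw [key]
  have h₁' : DD I₁ n₁ = ⊥ := (key I₁ n₁).mp h₁
  have h₂' : DD I₂ n₂ = ⊥ := (key I₂ n₂).mp h₂
  refine le_bot_iff.mp (le_trans (DD_sup_le I₁ I₂ (2 * N)) ?_)
  apply Finset.sup_le
  intro p hp
  rw [Finset.mem_range] at hp
  by_cases hpN : N + 1 ≤ p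
  · refine le_trans inf_le_left ?_
    cases p with
    | zero => omega
    | succ p =>
        rw [G]
        rw [DD_eq_bot I₁ h₁' (by omega : n₁ ≤ p)]
  · have hq : N + 1 ≤ 2 * N + 1 - p := by omega
    refine le_trans inf_le_right ?_
    rcases Nat.exists_eq_add_of_le hq with ⟨c, hc⟩
    rw [hc, show N + 1 + c = N + c + 1 by omega, G_succ,
      DD_eq_bot I₂ h₂' (by omega : n₂ ≤ N + c)]
end

section
/- Let C be a nilpotent metabelian Lie algebra over a field k that is not abelian (its nilpotency class is at least 2). Then there exist c₁, c₂ ∈ C such that ⁅c₁, c₂⁆ ≠ 0 and the Lie subalgebra D of C generated by {c₁, c₂} is nilpotent of class exactly 2, i.e. ⁅⁅x, y⁆, z⁆ = 0 for all x, y, z ∈ D while ⁅c₁, c₂⁆ ≠ 0. -/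
/-- A non-abelian nilpotent metabelian Lie algebra contains a 2-generated subalgebra of
nilpotency class exactly 2. -/
theorem exists_two_generated_class_two {k C : Type*} [Field k] [LieRing C] [LieAlgebra k C]
    (hC : IsMetabelian C) [LieRing.IsNilpotent C]
    (hnab : ¬ ∀ x y : C, ⁅x, y⁆ = 0) :
    ∃ c₁ c₂ : C, ⁅c₁, c₂⁆ ≠ 0 ∧
      ∀ x y z : C,
        x ∈ LieSubalgebra.lieSpan k C {c₁, c₂} →
        y ∈ LieSubalgebra.lieSpan k C {c₁, c₂} →
        z ∈ LieSubalgebra.lieSpan k C {c₁, c₂} →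
        ⁅⁅x, y⁆, z⁆ = 0 := by
  have hnil : ∃ n, LieModule.lowerCentralSeries k C C n = ⊥ :=
    LieModule.IsNilpotent.nilpotent k C C
  classical
  set N := Nat.find hnil with hN
  have hNbot : LieModule.lowerCentralSeries k C C N = ⊥ := Nat.find_spec hnil
  -- N ≥ 2
  have hN2 : 2 ≤ N := by
    by_contra h
    push_neg at h
    interval_cases N
    · apply hnab
      intro x y
      have := hNbot
      rw [LieModule.lowerCentralSeries_zero] at this
      have hx : x ∈ (⊥ : LieSubmodule k C C) := this ▸ LieSubmodule.mem_top x
      rw [LieSubmodule.mem_bot] at hx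
      simp [hx]
    · apply hnab
      intro x y
      have := hNbot
      rw [show (1 : ℕ) = 0 + 1 from rfl, LieModule.lowerCentralSeries_succ,
        LieModule.lowerCentralSeries_zero, LieSubmodule.lie_eq_bot_iff] at this
      exact this x (LieSubmodule.mem_top x) y (LieSubmodule.mem_top y)
  -- lowerCentralSeries (N-1) ≠ ⊥
  have hprev : LieModule.lowerCentralSeries k C C (N - 1) ≠ ⊥ :=
    Nat.find_min hnil (by omega)
  obtain ⟨M, hM⟩ : ∃ M, N - 1 = M + 1 := ⟨N - 2, by omega⟩
  rw [hM, LieModule.lowerCentralSeries_succ] at hprev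
  rw [Ne, LieSubmodule.lie_eq_bot_iff] at hprev
  push_neg at hprev
  obtain ⟨c₁, -, c₂, hc₂, hne⟩ := hprev
  -- The bracket z₀ := ⁅c₁, c₂⁆ is central.
  set z₀ : C := ⁅c₁, c₂⁆ with hz₀
  have hcentral : ∀ c : C, ⁅c, z₀⁆ = 0 := by
    intro c
    have hz : z₀ ∈ LieModule.lowerCentralSeries k C C (N - 1) := by
      rw [hM, LieModule.lowerCentralSeries_succ]
      exact LieSubmodule.lie_mem_lie (LieSubmodule.mem_top c₁) hc₂
    have : ⁅c, z₀⁆ ∈ LieModule.lowerCentralSeries k C C N := by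
      have : ⁅c, z₀⁆ ∈ ⁅(⊤ : LieIdeal k C),
          LieModule.lowerCentralSeries k C C (N - 1)⁆ :=
        LieSubmodule.lie_mem_lie (LieSubmodule.mem_top c) hz
      rwa [show N = (N - 1) + 1 by omega, LieModule.lowerCentralSeries_succ]
    rw [hNbot, LieSubmodule.mem_bot] at this
    exact this
  have hcentral' : ∀ c : C, ⁅z₀, c⁆ = 0 := by
    intro c
    rw [← lie_skew, hcentral, neg_zero]
  refine ⟨c₁, c₂, hne, ?_⟩
  -- The set of "linear span of c₁,c₂ plus central elements" is a Lie subalgebra.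
  set Z : Submodule k C :=
    { carrier := {w | ∀ c : C, ⁅w, c⁆ = 0}
      add_mem' := fun ha hb c => by rw [add_lie, ha c, hb c, add_zero]
      zero_mem' := fun c => zero_lie c
      smul_mem' := fun t w hw c => by rw [smul_lie, hw c, smul_zero] } with hZ
  set Dsub : Submodule k C := Submodule.span k {c₁, c₂} ⊔ Z with hD
  -- brackets of two elements of span {c₁, c₂} are central
  have hbr : ∀ s ∈ Submodule.span k ({c₁, c₂} : Set C),
      ∀ t ∈ Submodule.span k ({c₁, c₂} : Set C), ⁅s, t⁆ ∈ Z := by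
    intro s hs t ht
    rw [Submodule.mem_span_pair] at hs ht
    obtain ⟨a, b, rfl⟩ := hs
    obtain ⟨a', b', rfl⟩ := ht
    intro c
    simp only [lie_add, add_lie, lie_smul, smul_lie, lie_self, smul_zero,
      add_zero, zero_add, ← hz₀]
    rw [show ⁅c₂, c₁⁆ = -z₀ from by rw [← lie_skew]]
    simp only [smul_neg, add_lie, neg_lie, smul_lie, hcentral' c, smul_zero,
      neg_zero, add_zero]
  have hDlie : ∀ a ∈ Dsub, ∀ b ∈ Dsub, ⁅a, b⁆ ∈ Dsub := by
    intro a ha b hb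
    rw [hD, Submodule.mem_sup] at ha hb
    obtain ⟨s, hs, u, hu, rfl⟩ := ha
    obtain ⟨t, ht, v, hv, rfl⟩ := hb
    have hus : ∀ c : C, ⁅u, c⁆ = 0 := hu
    have hvs : ∀ c : C, ⁅v, c⁆ = 0 := hv
    have : ⁅s + u, t + v⁆ = ⁅s, t⁆ := by
      rw [add_lie, lie_add, lie_add, hus t, hus v, add_zero,
        show ⁅s, v⁆ = 0 by rw [← lie_skew, hvs s, neg_zero], add_zero, add_zero]
    rw [this]
    exact Submodule.mem_sup_right (hbr s hs t ht)
  set D : LieSubalgebra k C := { Dsub with lie_mem' := fun ha hb => hDlie _ ha _ hb }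
  have hle : LieSubalgebra.lieSpan k C {c₁, c₂} ≤ D := by
    rw [LieSubalgebra.lieSpan_le]
    intro w hw
    rcases hw with rfl | hw
    · exact Submodule.mem_sup_left (Submodule.subset_span (by simp))
    · rcases hw with rfl
      exact Submodule.mem_sup_left (Submodule.subset_span (by simp))
  intro x y z hx hy _
  have hx' : x ∈ Dsub := hle hx
  have hy' : y ∈ Dsub := hle hy
  rw [hD, Submodule.mem_sup] at hx' hy'
  obtain ⟨s, hs, u, hu, rfl⟩ := hx'
  obtain ⟨t, ht, v, hv, rfl⟩ := hy'
  have hus : ∀ c : C, ⁅u, c⁆ = 0 := hu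
  have hvs : ∀ c : C, ⁅v, c⁆ = 0 := hv
  have hxy : ⁅s + u, t + v⁆ = ⁅s, t⁆ := by
    rw [add_lie, lie_add, lie_add, hus t, hus v, add_zero,
      show ⁅s, v⁆ = 0 by rw [← lie_skew, hvs s, neg_zero], add_zero, add_zero]
  rw [hxy]
  exact hbr s hs t ht z
end

section
/- Let A be a metabelian Lie algebra over a field k and let a ∈ A be an element that commutes with every element of the derived ideal, i.e. ⁅a, ⁅x, y⁆⁆ = 0 for all x, y ∈ A. Then a lies in the Fitting radical Fit(A). -/
/-- The Fitting radical of a Lie algebra: the supremum of all nilpotent Lie ideals,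
i.e. the Lie ideal generated by the union of all nilpotent Lie ideals. -/
noncomputable def fittingRadical (k A : Type*) [CommRing k] [LieRing A] [LieAlgebra k A] :
    LieIdeal k A :=
  sSup {I : LieIdeal k A | LieRing.IsNilpotent I}

/-- In a metabelian Lie algebra, an element commuting with every element of the derived
ideal lies in the Fitting radical. -/
theorem mem_fittingRadical_of_commutes_with_derived {k A : Type*} [Field k] [LieRing A]
    [LieAlgebra k A] (hA : IsMetabelian A) (a : A)
    (h : ∀ x y : A, ⁅a, ⁅x, y⁆⁆ = 0) :
    a ∈ fittingRadical k A := by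
  set D : LieIdeal k A := ⁅(⊤ : LieIdeal k A), (⊤ : LieIdeal k A)⁆ with hD
  -- membership in D as a linear span of brackets
  have hDspan : (LieSubmodule.toSubmodule D) =
      Submodule.span k {m : A | ∃ x : A, ∃ n : A, ⁅x, n⁆ = m} := by
    rw [hD, LieSubmodule.lieIdeal_oper_eq_linear_span]
    congr 1
    ext m
    simp only [Set.mem_setOf_eq]
    constructor
    · rintro ⟨⟨x, -⟩, ⟨n, -⟩, rfl⟩; exact ⟨x, n, rfl⟩
    · rintro ⟨x, n, rfl⟩; exact ⟨⟨x, trivial⟩, ⟨n, trivial⟩, rfl⟩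
  have ha_d : ∀ d ∈ D, ⁅a, d⁆ = 0 := by
    intro d hd
    have hd' : d ∈ Submodule.span k {m : A | ∃ x : A, ∃ n : A, ⁅x, n⁆ = m} := by
      rw [← hDspan]; exact hd
    refine Submodule.span_induction ?_ ?_ ?_ ?_ hd'
    · rintro m ⟨x, n, rfl⟩; exact h x n
    · simp
    · intro x y _ _ hx hy; rw [lie_add, hx, hy, add_zero]
    · intro c x _ hx; rw [lie_smul, hx, smul_zero]
  have hDD : ∀ d ∈ D, ∀ e ∈ D, ⁅d, e⁆ = 0 := by
    intro d hd
    have hd' : d ∈ Submodule.span k {m : A | ∃ x : A, ∃ n : A, ⁅x, n⁆ = m} := by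
      rw [← hDspan]; exact hd
    refine Submodule.span_induction ?_ ?_ ?_ ?_ hd'
    · rintro m ⟨x, n, rfl⟩ e he
      have he' : e ∈ Submodule.span k {m : A | ∃ x : A, ∃ n : A, ⁅x, n⁆ = m} := by
        rw [← hDspan]; exact he
      refine Submodule.span_induction ?_ ?_ ?_ ?_ he'
      · rintro m ⟨x', n', rfl⟩; exact hA x n x' n'
      · simp
      · intro u v _ _ hu hv; rw [lie_add, hu, hv, add_zero]
      · intro c u _ hu; rw [lie_smul, hu, smul_zero]
    · intro e _; simp
    · intro x y _ _ hx hy e he; rw [add_lie, hx e he, hy e he, add_zero]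
    · intro c x _ hx e he; rw [smul_lie, hx e he, smul_zero]
  -- the ideal generated by `a`
  let J : LieIdeal k A :=
    { toSubmodule := Submodule.span k {a} ⊔ (LieSubmodule.toSubmodule D)
      lie_mem := by
        intro x m _
        have : ⁅x, m⁆ ∈ D := LieSubmodule.lie_mem_lie trivial trivial
        exact Submodule.mem_sup_right this }
  have hmemJ : ∀ m : A, m ∈ J ↔ m ∈ Submodule.span k {a} ⊔ (LieSubmodule.toSubmodule D) :=
    fun m => Iff.rfl
  have haJ : a ∈ J := by
    rw [hmemJ]
    exact Submodule.mem_sup_left (Submodule.mem_span_singleton_self a)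
  -- a useful commuting fact: anything in J commutes with anything in J
  have key : ∀ x ∈ J, ∀ y ∈ J, ⁅x, y⁆ = 0 := by
    intro x hx y hy
    rw [hmemJ] at hx hy
    obtain ⟨s, hs, d, hd, rfl⟩ := Submodule.mem_sup.mp hx
    obtain ⟨s', hs', d', hd', rfl⟩ := Submodule.mem_sup.mp hy
    obtain ⟨c, rfl⟩ := Submodule.mem_span_singleton.mp hs
    obtain ⟨c', rfl⟩ := Submodule.mem_span_singleton.mp hs'
    have h1 : ⁅a, a⁆ = 0 := lie_self a
    have h2 : ⁅a, d'⁆ = 0 := ha_d d' hd'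
    have h3 : ⁅d, (a : A)⁆ = 0 := by
      rw [← lie_skew, ha_d d hd, neg_zero]
    have h4 : ⁅d, d'⁆ = 0 := hDD d hd d' hd'
    simp [lie_add, add_lie, lie_smul, smul_lie, h1, h2, h3, h4]
  have hab : IsLieAbelian J := by
    constructor
    intro x y
    ext
    exact key x x.2 y y.2
  have hnil : LieRing.IsNilpotent J := inferInstance
  have hJle : J ≤ fittingRadical k A := le_sSup hnil
  exact hJle haJ
end

section
/- Every finitely generated metabelian Lie algebra A over a field k is finitely presented in the category of metabelian Lie algebras: there exist n : ℕ, a surjective Lie algebra homomorphism π from the free metabelian Lie algebra F(k, Fin n) onto A, and a finite subset S of F(k, Fin n) such that the kernel of π equals the Lie ideal of F(k, Fin n) generated by S. -/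
/-- The free metabelian Lie algebra on `X` over `k`: the quotient of the free Lie algebra
on `X` by its second derived ideal `⁅⁅L,L⁆,⁅L,L⁆⁆`. -/
abbrev FreeMetabelianLie (k : Type*) (X : Type*) [CommRing k] :=
  FreeLieAlgebra k X ⧸ LieAlgebra.derivedSeries k (FreeLieAlgebra k X) 2

/-- The image in the free metabelian Lie algebra of the generator `x`. -/
noncomputable def fmGen (k : Type*) {X : Type*} [CommRing k] (x : X) :
    FreeMetabelianLie k X :=
  LieSubmodule.Quotient.mk' _ (FreeLieAlgebra.of k x)

section FM
variable (k : Type*) [CommRing k] (X : Type*)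

/-- The quotient map as a Lie algebra morphism. -/
noncomputable def fmMk : FreeLieAlgebra k X →ₗ⁅k⁆ FreeMetabelianLie k X :=
  { (LieAlgebra.derivedSeries k (FreeLieAlgebra k X) 2).toSubmodule.mkQ with
    map_lie' := rfl }

lemma fmMk_surjective : Function.Surjective (fmMk k X) :=
  Submodule.Quotient.mk_surjective _

lemma fmMk_of (x : X) : fmMk k X (FreeLieAlgebra.of k x) = fmGen k x := rfl

lemma fmMk_ker_le (x : FreeLieAlgebra k X)
    (hx : x ∈ LieAlgebra.derivedSeries k (FreeLieAlgebra k X) 2) : fmMk k X x = 0 :=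
  (Submodule.Quotient.mk_eq_zero _).mpr hx
end FM

section Helpers
variable {k : Type*} [CommRing k] {A : Type*} [LieRing A] [LieAlgebra k A]

lemma derived_one_eq : LieAlgebra.derivedSeries k A 1 = ⁅(⊤ : LieIdeal k A), (⊤ : LieIdeal k A)⁆ := by
  rw [LieAlgebra.derivedSeries_def, LieAlgebra.derivedSeriesOfIdeal_succ,
    LieAlgebra.derivedSeriesOfIdeal_zero]

lemma derived_two_eq : LieAlgebra.derivedSeries k A 2 =
    ⁅LieAlgebra.derivedSeries k A 1, LieAlgebra.derivedSeries k A 1⁆ := by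
  rw [LieAlgebra.derivedSeries_def, LieAlgebra.derivedSeriesOfIdeal_succ,
    ← LieAlgebra.derivedSeries_def]

lemma lie_eq_zero_of_metabelian (hA : IsMetabelian A) {x y : A}
    (hx : x ∈ LieAlgebra.derivedSeries k A 1) (hy : y ∈ LieAlgebra.derivedSeries k A 1) :
    ⁅x, y⁆ = 0 := by
  rw [derived_one_eq (k := k)] at hx hy
  rw [← LieSubmodule.mem_toSubmodule, LieSubmodule.lieIdeal_oper_eq_linear_span'] at hx hy
  have key : ∀ a b : A, ∀ y ∈ Submodule.span k
      {m : A | ∃ x ∈ (⊤ : LieIdeal k A), ∃ n ∈ (⊤ : LieIdeal k A), ⁅x, n⁆ = m},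
      ⁅(⁅a, b⁆ : A), y⁆ = 0 := by
    intro a b y hy
    induction hy using Submodule.span_induction with
    | mem z hz => obtain ⟨c, -, d, -, rfl⟩ := hz; exact hA a b c d
    | zero => simp
    | add u v _ _ h1 h2 => rw [lie_add, h1, h2, add_zero]
    | smul t u _ h1 => rw [lie_smul, h1, smul_zero]
  induction hx using Submodule.span_induction with
  | mem z hz => obtain ⟨c, -, d, -, rfl⟩ := hz; exact key c d y hy
  | zero => simp
  | add u v _ _ h1 h2 => rw [add_lie, h1, h2, add_zero]
  | smul t u _ h1 => rw [smul_lie, h1, smul_zero]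

lemma derived_two_eq_bot (hA : IsMetabelian A) : LieAlgebra.derivedSeries k A 2 = ⊥ := by
  rw [eq_bot_iff, derived_two_eq (k := k), LieSubmodule.lie_le_iff]
  intro x hx m hm
  simp [lie_eq_zero_of_metabelian hA hx hm]

lemma mem_derived_one {a b : A} : ⁅a, b⁆ ∈ LieAlgebra.derivedSeries k A 1 := by
  rw [derived_one_eq (k := k)]
  exact LieSubmodule.lie_mem_lie trivial trivial

end Helpers

section FM2
variable (k : Type*) [CommRing k] (X : Type*)

lemma fm_derived_two_eq_bot :
    LieAlgebra.derivedSeries k (FreeMetabelianLie k X) 2 = ⊥ := by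
  rw [← LieIdeal.derivedSeries_map_eq 2 (fmMk_surjective k X), LieIdeal.map_eq_bot_iff,
    LieHom.le_ker_iff]
  exact fmMk_ker_le k X

lemma fm_isMetabelian : IsMetabelian (FreeMetabelianLie k X) := by
  intro a b c d
  have h2 := fm_derived_two_eq_bot k X
  rw [derived_two_eq (k := k) (A := FreeMetabelianLie k X)] at h2
  have h : ⁅⁅a, b⁆, ⁅c, d⁆⁆ ∈ ⁅LieAlgebra.derivedSeries k (FreeMetabelianLie k X) 1,
      LieAlgebra.derivedSeries k (FreeMetabelianLie k X) 1⁆ :=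
    LieSubmodule.lie_mem_lie mem_derived_one mem_derived_one
  rw [h2] at h
  simpa using h

lemma fm_lieSpan_gen :
    LieSubalgebra.lieSpan k (FreeMetabelianLie k X) (Set.range (fmGen k (X := X))) = ⊤ := by
  set K := LieSubalgebra.lieSpan k (FreeMetabelianLie k X) (Set.range (fmGen k (X := X)))
  have hψ : ∀ x : FreeLieAlgebra k X, fmMk k X x ∈ K := by
    let ψ : FreeLieAlgebra k X →ₗ⁅k⁆ K :=
      FreeLieAlgebra.lift k fun i =>
        (⟨fmGen k i, LieSubalgebra.subset_lieSpan (Set.mem_range_self i)⟩ : K)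
    have h : K.incl.comp ψ = fmMk k X := by
      apply FreeLieAlgebra.hom_ext
      intro x
      simp [ψ, FreeLieAlgebra.lift_of_apply, fmMk_of]
    intro x
    have h' := LieHom.congr_fun h x
    simp only [LieHom.coe_comp, Function.comp_apply] at h'
    rw [← h']
    exact (ψ x).2
  rw [eq_top_iff]
  intro z _
  obtain ⟨x, rfl⟩ := fmMk_surjective k X z
  exact hψ x

end FM2

section FMLift
variable {k : Type*} [CommRing k] {X : Type*} {A : Type*} [LieRing A] [LieAlgebra k A]

noncomputable def fmLift (hA : IsMetabelian A) (f : X → A) :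
    FreeMetabelianLie k X →ₗ⁅k⁆ A :=
  have hker : (LieAlgebra.derivedSeries k (FreeLieAlgebra k X) 2).toSubmodule ≤
      LinearMap.ker ((FreeLieAlgebra.lift k f : FreeLieAlgebra k X →ₗ⁅k⁆ A) :
        FreeLieAlgebra k X →ₗ[k] A) := by
    intro x hx
    have h1 : (LieAlgebra.derivedSeries k (FreeLieAlgebra k X) 2).map
        (FreeLieAlgebra.lift k f) ≤ ⊥ := by
      rw [← derived_two_eq_bot (k := k) hA]
      exact LieIdeal.derivedSeries_map_le 2
    have h2 := h1 (LieIdeal.mem_map (f := FreeLieAlgebra.lift k f) hx)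
    simpa using h2
  { Submodule.liftQ _ ((FreeLieAlgebra.lift k f : FreeLieAlgebra k X →ₗ⁅k⁆ A) :
      FreeLieAlgebra k X →ₗ[k] A) hker with
    map_lie' := by rintro ⟨x⟩ ⟨y⟩; exact (FreeLieAlgebra.lift k f).map_lie x y }

lemma fmLift_gen (hA : IsMetabelian A) (f : X → A) (x : X) :
    fmLift hA f (fmGen k x) = f x :=
  FreeLieAlgebra.lift_of_apply f x

lemma fmLift_mk (hA : IsMetabelian A) (f : X → A) (x : FreeLieAlgebra k X) :
    fmLift hA f (fmMk k X x) = FreeLieAlgebra.lift k f x := rfl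

end FMLift

section Main
variable (k : Type*) [Field k] (n : ℕ)

/-- The derived ideal of the free metabelian Lie algebra. -/
noncomputable abbrev fmD : LieIdeal k (FreeMetabelianLie k (Fin n)) :=
  LieAlgebra.derivedSeries k (FreeMetabelianLie k (Fin n)) 1

lemma fmD_lie_zero {x y : FreeMetabelianLie k (Fin n)}
    (hx : x ∈ fmD k n) (hy : y ∈ fmD k n) : ⁅x, y⁆ = 0 :=
  lie_eq_zero_of_metabelian (fm_isMetabelian k (Fin n)) hx hy

/-- `ad (fmGen i)` as an endomorphism of the derived ideal. -/
noncomputable def adg (i : Fin n) : Module.End k ↥(fmD k n) where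
  toFun u := ⟨⁅fmGen k i, (u : FreeMetabelianLie k (Fin n))⁆, (fmD k n).lie_mem u.2⟩
  map_add' u v := Subtype.ext (by simp [lie_add])
  map_smul' t u := Subtype.ext (by simp [lie_smul])

@[simp] lemma adg_apply (i : Fin n) (u : ↥(fmD k n)) :
    ((adg k n i u : ↥(fmD k n)) : FreeMetabelianLie k (Fin n)) = ⁅fmGen k i, (u : FreeMetabelianLie k (Fin n))⁆ := rfl

lemma adg_comm (i j : Fin n) : adg k n i * adg k n j = adg k n j * adg k n i := by
  ext u
  have h : ⁅(⁅fmGen k i, fmGen k j⁆ : FreeMetabelianLie k (Fin n)), (u : FreeMetabelianLie k (Fin n))⁆ = 0 :=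
    fmD_lie_zero k n mem_derived_one u.2
  have h2 := lie_lie (fmGen k i) (fmGen k j) (u : FreeMetabelianLie k (Fin n))
  rw [h] at h2
  have h3 : ⁅fmGen k i, ⁅fmGen k j, (u : FreeMetabelianLie k (Fin n))⁆⁆ =
      ⁅fmGen k j, ⁅fmGen k i, (u : FreeMetabelianLie k (Fin n))⁆⁆ := by
    exact sub_eq_zero.mp h2.symm
  exact h3

end Main

section Main2
variable (k : Type*) [Field k] (n : ℕ)

noncomputable abbrev fmC : Subalgebra k (Module.End k ↥(fmD k n)) :=
  Algebra.adjoin k (Set.range (adg k n))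

noncomputable instance : CommRing ↥(fmC k n) :=
  Algebra.adjoinCommRingOfComm k (by
    rintro a ⟨i, rfl⟩ b ⟨j, rfl⟩; exact adg_comm k n i j)

instance : IsNoetherianRing ↥(fmC k n) := by
  classical
  have hfg : (fmC k n).FG := by
    have h : Set.range (adg k n) = ((Finset.image (adg k n) Finset.univ : Finset _) : Set _) := by
      simp
    rw [fmC, h]
    exact Subalgebra.fg_adjoin_finset _
  have := (Subalgebra.fg_iff_finiteType _).mp hfg
  exact Algebra.FiniteType.isNoetherianRing k _

lemma fmC_smul (c : ↥(fmC k n)) (u : ↥(fmD k n)) :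
    c • u = (c : Module.End k ↥(fmD k n)) u := rfl

attribute [local instance] LieRing.ofAssociativeRing

/-- Membership in the kernel of something that kills the derived ideal. -/
lemma fm_span_gen_inter_derived {s : FreeMetabelianLie k (Fin n)}
    (hs : s ∈ Submodule.span k (Set.range (fmGen k (X := Fin n))))
    (hsD : s ∈ fmD k n) : s = 0 := by
  classical
  have hmet : IsMetabelian (MvPolynomial (Fin n) k) := by
    intro a b c d
    simp [Ring.lie_def, mul_comm]
  let abF : FreeMetabelianLie k (Fin n) →ₗ⁅k⁆ MvPolynomial (Fin n) k :=
    fmLift hmet (fun i => (MvPolynomial.X i : MvPolynomial (Fin n) k))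
  -- abF kills the derived ideal
  have hab : abF s = 0 := by
    have h1 : (fmD k n).map abF ≤ LieAlgebra.derivedSeries k (MvPolynomial (Fin n) k) 1 :=
      LieIdeal.derivedSeries_map_le 1
    have h2 : LieAlgebra.derivedSeries k (MvPolynomial (Fin n) k) 1 = ⊥ := by
      rw [eq_bot_iff, derived_one_eq (k := k), LieSubmodule.lie_le_iff]
      intro x _ m _
      simp [Ring.lie_def, mul_comm]
    have := h1 (LieIdeal.mem_map (f := abF) hsD)
    rw [h2] at this
    simpa using this
  rw [Submodule.mem_span_range_iff_exists_fun] at hs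
  obtain ⟨c, rfl⟩ := hs
  have h3 : ∑ i, c i • (MvPolynomial.X i : MvPolynomial (Fin n) k) = 0 := by
    rw [← hab]
    show _ = (abF : FreeMetabelianLie k (Fin n) →ₗ[k] MvPolynomial (Fin n) k) _
    rw [map_sum]
    refine (Finset.sum_congr rfl fun i _ => ?_).symm
    rw [map_smul]
    exact congrArg (fun z => c i • z) (fmLift_gen hmet _ i)
  have h4 := (Fintype.linearIndependent_iff.mp
    (MvPolynomial.linearIndependent_X (R := k) (σ := Fin n))) c h3
  simp [h4]

end Main2

section Main3
variable (k : Type*) [Field k] (n : ℕ)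

noncomputable def fmB (p : Fin n × Fin n) : ↥(fmD k n) :=
  ⟨⁅fmGen k p.1, fmGen k p.2⁆, mem_derived_one⟩

/-- Applying an element of `fmC` preserves any Lie submodule (in particular Lie ideal)
containing the element. -/
lemma fmC_apply_mem (K : LieSubmodule k (FreeMetabelianLie k (Fin n)) (FreeMetabelianLie k (Fin n)))
    {c : Module.End k ↥(fmD k n)} (hc : c ∈ fmC k n) :
    ∀ u : ↥(fmD k n), (u : FreeMetabelianLie k (Fin n)) ∈ K →
      ((c u : ↥(fmD k n)) : FreeMetabelianLie k (Fin n)) ∈ K := by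
  induction hc using Algebra.adjoin_induction with
  | mem x hx =>
    obtain ⟨i, rfl⟩ := hx
    intro u hu
    exact K.lie_mem hu
  | algebraMap r =>
    intro u hu
    rw [Module.algebraMap_end_apply]
    have : ((r • u : ↥(fmD k n)) : FreeMetabelianLie k (Fin n)) = r • (u : FreeMetabelianLie k (Fin n)) := rfl
    rw [this]
    exact K.smul_mem r hu
  | add x y hx hy ihx ihy =>
    intro u hu
    have : (((x + y) u : ↥(fmD k n)) : FreeMetabelianLie k (Fin n)) =
        ((x u : ↥(fmD k n)) : FreeMetabelianLie k (Fin n)) + ((y u : ↥(fmD k n)) : FreeMetabelianLie k (Fin n)) := rfl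
    rw [this]
    exact K.add_mem (ihx u hu) (ihy u hu)
  | mul x y hx hy ihx ihy =>
    intro u hu
    exact ihx (y u) (ihy u hu)

lemma fmC_smul_coe (c : ↥(fmC k n)) (u : ↥(fmD k n)) :
    ((c • u : ↥(fmD k n)) : FreeMetabelianLie k (Fin n)) =
      (((c : Module.End k ↥(fmD k n)) u : ↥(fmD k n)) : FreeMetabelianLie k (Fin n)) := rfl

/-- The derived ideal is spanned over `fmC` by the basic brackets. -/
lemma fm_derived_spanned (u : ↥(fmD k n)) :
    u ∈ Submodule.span ↥(fmC k n) (Set.range (fmB k n)) := by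
  set N := Submodule.span ↥(fmC k n) (Set.range (fmB k n)) with hN
  set img : Set (FreeMetabelianLie k (Fin n)) := Subtype.val '' (N : Set ↥(fmD k n)) with himg
  set P : Submodule k (FreeMetabelianLie k (Fin n)) :=
    Submodule.span k (Set.range (fmGen k (X := Fin n)) ∪ img) with hP
  -- elements of img are in the derived ideal
  have himgD : ∀ x ∈ img, x ∈ fmD k n := by
    rintro x ⟨v, _, rfl⟩; exact v.2
  -- img is closed under bracketing with generators
  have himg_lie : ∀ (i : Fin n), ∀ x ∈ img, ⁅fmGen k i, x⁆ ∈ img := by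
    rintro i x ⟨v, hv, rfl⟩
    refine ⟨(⟨adg k n i, Algebra.subset_adjoin (Set.mem_range_self i)⟩ : ↥(fmC k n)) • v,
      N.smul_mem _ hv, ?_⟩
    rw [fmC_smul_coe]
    rfl
  -- the union is closed under brackets, up to P
  have hbr : ∀ x ∈ Set.range (fmGen k (X := Fin n)) ∪ img,
      ∀ y ∈ Set.range (fmGen k (X := Fin n)) ∪ img, ⁅x, y⁆ ∈ P := by
    rintro x (⟨i, rfl⟩ | hx) y (⟨j, rfl⟩ | hy)
    · exact Submodule.subset_span (Or.inr ⟨fmB k n (i, j), Submodule.subset_span ⟨(i, j), rfl⟩, rfl⟩)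
    · exact Submodule.subset_span (Or.inr (himg_lie i y hy))
    · rw [← lie_skew]
      exact P.neg_mem (Submodule.subset_span (Or.inr (himg_lie j x hx)))
    · rw [fmD_lie_zero k n (himgD x hx) (himgD y hy)]
      exact P.zero_mem
  -- P is closed under brackets
  have hPbr : ∀ x ∈ P, ∀ y ∈ P, ⁅x, y⁆ ∈ P := by
    intro x hx y hy
    induction hx, hy using Submodule.span_induction₂ with
    | mem_mem a b ha hb => exact hbr a ha b hb
    | zero_left b hb => simp
    | zero_right a ha => simp
    | add_left a₁ a₂ b h₁ h₂ h₃ ih₁ ih₂ => rw [add_lie]; exact P.add_mem ih₁ ih₂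
    | add_right a b₁ b₂ h₁ h₂ h₃ ih₁ ih₂ => rw [lie_add]; exact P.add_mem ih₁ ih₂
    | smul_left t a b ha hb ih => rw [smul_lie]; exact P.smul_mem t ih
    | smul_right t a b ha hb ih => rw [lie_smul]; exact P.smul_mem t ih
  -- P is all of F
  have hPtop : ∀ z : FreeMetabelianLie k (Fin n), z ∈ P := by
    let PL : LieSubalgebra k (FreeMetabelianLie k (Fin n)) :=
      { P with lie_mem' := fun {x y} hx hy => hPbr x hx y hy }
    have h1 : LieSubalgebra.lieSpan k (FreeMetabelianLie k (Fin n))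
        (Set.range (fmGen k (X := Fin n))) ≤ PL := by
      rw [LieSubalgebra.lieSpan_le]
      intro x hx
      exact Submodule.subset_span (Or.inl hx)
    rw [fm_lieSpan_gen] at h1
    intro z
    exact h1 trivial
  -- now decompose u
  have hu := hPtop (u : FreeMetabelianLie k (Fin n))
  rw [hP, Submodule.span_union] at hu
  obtain ⟨s, hs, m, hm, hsum⟩ := Submodule.mem_sup.mp hu
  -- the span of img is img-like: get an element of N
  have himg_span : ∀ x ∈ Submodule.span k img, ∃ v : ↥(fmD k n), v ∈ N ∧ (v : FreeMetabelianLie k (Fin n)) = x := by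
    intro x hx
    induction hx using Submodule.span_induction with
    | mem z hz => obtain ⟨v, hv, rfl⟩ := hz; exact ⟨v, hv, rfl⟩
    | zero => exact ⟨0, N.zero_mem, rfl⟩
    | add a b _ _ iha ihb =>
      obtain ⟨v, hv, rfl⟩ := iha
      obtain ⟨w, hw, rfl⟩ := ihb
      exact ⟨v + w, N.add_mem hv hw, rfl⟩
    | smul t a _ iha =>
      obtain ⟨v, hv, rfl⟩ := iha
      refine ⟨(algebraMap k ↥(fmC k n) t) • v, N.smul_mem _ hv, ?_⟩
      rw [fmC_smul_coe]
      show ((algebraMap k ↥(fmC k n) t : Module.End k ↥(fmD k n)) v : FreeMetabelianLie k (Fin n)) = _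
      rw [Subalgebra.coe_algebraMap, Module.algebraMap_end_apply]
      rfl
  obtain ⟨v, hv, hveq⟩ := himg_span m hm
  -- s = u - v lies in span of generators and in the derived ideal, hence is 0
  have hs0 : s = 0 := by
    apply fm_span_gen_inter_derived k n hs
    have heq : s = (u : FreeMetabelianLie k (Fin n)) - (v : FreeMetabelianLie k (Fin n)) := by
      rw [hveq]
      exact eq_sub_of_add_eq hsum
    rw [heq]
    exact (fmD k n).sub_mem u.2 v.2
  have : u = v := by
    apply Subtype.ext
    rw [← hsum, hs0, zero_add, hveq]
  rw [this]
  exact hv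

end Main3


/-- Every finitely generated metabelian Lie algebra is finitely presented in the category
of metabelian Lie algebras. -/
theorem finitely_presented_of_fg_metabelian {k A : Type*} [Field k] [LieRing A]
    [LieAlgebra k A] (hA : IsMetabelian A)
    (hfg : ∃ S : Finset A, LieSubalgebra.lieSpan k A ↑S = ⊤) :
    ∃ (n : ℕ) (π : FreeMetabelianLie k (Fin n) →ₗ⁅k⁆ A)
      (S : Finset (FreeMetabelianLie k (Fin n))),
      Function.Surjective π ∧
      π.ker = LieSubmodule.lieSpan k (FreeMetabelianLie k (Fin n)) ↑S := by
  classical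
  obtain ⟨S₀, hS₀⟩ := hfg
  set n := S₀.card with hn
  set e : Fin n → A := fun i => ((S₀.equivFin.symm i : S₀) : A) with he
  set π : FreeMetabelianLie k (Fin n) →ₗ⁅k⁆ A := fmLift hA e with hπ
  have hπgen : ∀ i, π (fmGen k i) = e i := fun i => fmLift_gen hA e i
  -- surjectivity
  have hsurj : Function.Surjective π := by
    rw [← LieHom.range_eq_top, eq_top_iff, ← hS₀]
    rw [LieSubalgebra.lieSpan_le]
    intro x hx
    refine ⟨fmGen k (S₀.equivFin ⟨x, hx⟩), ?_⟩
    exact (hπgen _).trans (by simp [he])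
  -- the kernel intersected with the derived ideal, as a `fmC`-submodule
  let KD : Submodule ↥(fmC k n) ↥(fmD k n) :=
    { carrier := {u | (u : FreeMetabelianLie k (Fin n)) ∈ π.ker}
      zero_mem' := π.ker.zero_mem
      add_mem' := fun ha hb => π.ker.add_mem ha hb
      smul_mem' := fun c u hu => fmC_apply_mem k n π.ker c.2 u hu }
  have hKD_mem : ∀ u : ↥(fmD k n), u ∈ KD ↔ (u : FreeMetabelianLie k (Fin n)) ∈ π.ker :=
    fun u => Iff.rfl
  -- Noetherianity
  have hfin : Module.Finite ↥(fmC k n) ↥(fmD k n) := by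
    constructor
    refine ⟨Finset.univ.image (fmB k n), ?_⟩
    have hset : ((Finset.univ.image (fmB k n) : Finset _) : Set _) = Set.range (fmB k n) := by
      simp
    rw [hset, eq_top_iff]
    intro u _
    exact fm_derived_spanned k n u
  have hNoeth : IsNoetherian ↥(fmC k n) ↥(fmD k n) :=
    isNoetherian_of_isNoetherianRing_of_finite _ _
  obtain ⟨T, hT⟩ := IsNoetherian.noetherian KD
  -- the quotient modulo the derived ideal
  set q : FreeMetabelianLie k (Fin n) →ₗ[k]
      (FreeMetabelianLie k (Fin n) ⧸ (fmD k n).toSubmodule) := (fmD k n).toSubmodule.mkQ with hq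
  have hqgen : ∀ x : FreeMetabelianLie k (Fin n),
      q x ∈ Submodule.span k (Set.range (q ∘ fmGen k (X := Fin n))) := by
    let Q : LieSubalgebra k (FreeMetabelianLie k (Fin n)) :=
      { Submodule.comap q (Submodule.span k (Set.range (q ∘ fmGen k (X := Fin n)))) with
        lie_mem' := by
          intro x y _ _
          show ⁅x, y⁆ ∈ Submodule.comap q (Submodule.span k (Set.range (⇑q ∘ fmGen k (X := Fin n))))
          rw [Submodule.mem_comap]
          have hz : q ⁅x, y⁆ = 0 := (Submodule.Quotient.mk_eq_zero _).mpr mem_derived_one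
          rw [hz]
          exact Submodule.zero_mem _ }
    have h1 : LieSubalgebra.lieSpan k (FreeMetabelianLie k (Fin n))
        (Set.range (fmGen k (X := Fin n))) ≤ Q := by
      rw [LieSubalgebra.lieSpan_le]
      rintro x ⟨i, rfl⟩
      exact Submodule.subset_span ⟨i, rfl⟩
    rw [fm_lieSpan_gen] at h1
    intro x
    exact h1 (LieSubalgebra.mem_top x)
  have hquotfin : Module.Finite k (FreeMetabelianLie k (Fin n) ⧸ (fmD k n).toSubmodule) := by
    constructor
    refine ⟨Finset.univ.image (q ∘ fmGen k (X := Fin n)), ?_⟩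
    have hset : ((Finset.univ.image (q ∘ fmGen k (X := Fin n)) : Finset _) : Set _) =
        Set.range (q ∘ fmGen k (X := Fin n)) := by simp [Function.comp_def]
    rw [hset, eq_top_iff]
    intro z _
    obtain ⟨x, rfl⟩ := Submodule.mkQ_surjective _ z
    exact hqgen x
  have hquotNoeth : IsNoetherian k (FreeMetabelianLie k (Fin n) ⧸ (fmD k n).toSubmodule) :=
    isNoetherian_of_isNoetherianRing_of_finite _ _
  set W : Submodule k (FreeMetabelianLie k (Fin n) ⧸ (fmD k n).toSubmodule) :=
    Submodule.map q (π.ker : LieIdeal k (FreeMetabelianLie k (Fin n))).toSubmodule with hW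
  obtain ⟨T₂, hT₂⟩ := IsNoetherian.noetherian W
  have hT₂lift : ∀ t ∈ T₂, ∃ x, x ∈ π.ker ∧ q x = t := by
    intro t ht
    have htW : t ∈ W := hT₂ ▸ Submodule.subset_span ht
    rw [hW, Submodule.mem_map] at htW
    obtain ⟨x, hx, hqx⟩ := htW
    exact ⟨x, hx, hqx⟩
  choose! uf huf1 huf2 using hT₂lift
  set S : Finset (FreeMetabelianLie k (Fin n)) :=
    T.image Subtype.val ∪ T₂.image uf with hS
  refine ⟨n, π, S, hsurj, ?_⟩
  set J := LieSubmodule.lieSpan k (FreeMetabelianLie k (Fin n))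
    (↑S : Set (FreeMetabelianLie k (Fin n))) with hJ
  have hSJ : ∀ x ∈ (S : Set (FreeMetabelianLie k (Fin n))), x ∈ J :=
    fun x hx => LieSubmodule.subset_lieSpan hx
  have hTJ : ∀ v : ↥(fmD k n), v ∈ Submodule.span ↥(fmC k n) (T : Set ↥(fmD k n)) →
      (v : FreeMetabelianLie k (Fin n)) ∈ J := by
    intro v hv
    induction hv using Submodule.span_induction with
    | mem z hz =>
      apply hSJ
      rw [hS]
      push_cast
      exact Set.mem_union_left _ ⟨z, hz, rfl⟩
    | zero => exact J.zero_mem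
    | add a b _ _ iha ihb => exact J.add_mem iha ihb
    | smul c a _ iha => exact fmC_apply_mem k n J c.2 a iha
  apply le_antisymm
  · -- ker ≤ lieSpan S
    intro x hx
    have hqx : q x ∈ Submodule.span k (T₂ : Set _) := by
      rw [hT₂, hW]
      exact Submodule.mem_map_of_mem hx
    obtain ⟨f, -, hf⟩ := Submodule.mem_span_finset.mp hqx
    set y := ∑ t ∈ T₂, f t • uf t with hy
    have hufJ : ∀ t ∈ T₂, uf t ∈ J := by
      intro t ht
      apply hSJ
      rw [hS]
      push_cast
      exact Set.mem_union_right _ ⟨t, ht, rfl⟩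
    have hyJ : y ∈ J := by
      rw [← LieSubmodule.mem_toSubmodule]
      exact Submodule.sum_mem _ fun t ht => Submodule.smul_mem _ _
        (by rw [LieSubmodule.mem_toSubmodule]; exact hufJ t ht)
    have hyK : y ∈ π.ker := by
      rw [← LieSubmodule.mem_toSubmodule]
      exact Submodule.sum_mem _ fun t ht => Submodule.smul_mem _ _
        (by rw [LieSubmodule.mem_toSubmodule]; exact huf1 t ht)
    have hqy : q y = q x := by
      rw [hy, map_sum, ← hf]
      exact Finset.sum_congr rfl fun t ht => by rw [map_smul, huf2 t ht]
    have hdD : x - y ∈ fmD k n := by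
      have h0 : q (x - y) = 0 := by rw [map_sub, hqy, sub_self]
      rw [← LieSubmodule.mem_toSubmodule]
      exact (Submodule.Quotient.mk_eq_zero _).mp h0
    have hdK : x - y ∈ π.ker := by
      rw [← LieSubmodule.mem_toSubmodule]
      apply Submodule.sub_mem
      · rw [LieSubmodule.mem_toSubmodule]; exact hx
      · rw [LieSubmodule.mem_toSubmodule]; exact hyK
    have hmemKD : (⟨x - y, hdD⟩ : ↥(fmD k n)) ∈ KD := hdK
    rw [← hT] at hmemKD
    have hdJ := hTJ _ hmemKD
    have hxeq : x = y + (x - y) := by abel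
    rw [hxeq]
    exact J.add_mem hyJ hdJ
  · rw [hJ, LieSubmodule.lieSpan_le]
    intro x hxS
    rw [hS] at hxS
    push_cast at hxS
    rcases hxS with ⟨t, ht, rfl⟩ | ⟨t, ht, rfl⟩
    · exact (hT ▸ Submodule.subset_span ht : (t : ↥(fmD k n)) ∈ KD)
    · exact huf1 t ht
end

section
/- Let k be a field, let Λ be a linearly ordered type, and let F = F(k, Λ) be the free metabelian Lie algebra on Λ over k with generators a_i (i ∈ Λ). Call an element of F a normalised monomial if it is either a generator a_i, or a left-normed product ⁅…⁅⁅a_{i₁}, a_{i₂}⁆, a_{i₃}⁆, …, a_{i_m}⁆ with m ≥ 2 and i₁ > i₂ ≤ i₃ ≤ … ≤ i_m. Then the family of all normalised monomials (indexed by the corresponding index sequences) is a basis of F as a k-vector space: it is linearly independent and spans F. -/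
/-- The index type for normalised monomials of the free metabelian Lie algebra over a
linearly ordered set `Λ`: either a single generator `a_i`, or a tuple
`(i₁, i₂, [i₃, …, i_m])` with `i₁ > i₂ ≤ i₃ ≤ … ≤ i_m`. -/
def NormIdx (Λ : Type*) [LinearOrder Λ] : Type _ :=
  Λ ⊕ {p : Λ × Λ × List Λ // p.2.1 < p.1 ∧ List.Pairwise (· ≤ ·) (p.2.1 :: p.2.2)}

/-- The normalised monomial of the free metabelian Lie algebra attached to an index: the
generator `a_i`, or the left-normed product `⁅…⁅⁅a_{i₁}, a_{i₂}⁆, a_{i₃}⁆, …, a_{i_m}⁆`. -/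
noncomputable def normMono (k : Type*) (Λ : Type*) [CommRing k] [LinearOrder Λ] :
    NormIdx Λ → FreeMetabelianLie k Λ
  | Sum.inl i => fmGen k i
  | Sum.inr p =>
      p.val.2.2.foldl (fun w c => ⁅w, fmGen k c⁆) ⁅fmGen k p.val.1, fmGen k p.val.2.1⁆



noncomputable section
open MvPolynomial

namespace MetaB

variable (k Λ : Type*) [Field k]

/-- The abelian "wreath-like" metabelian Lie algebra model. -/
abbrev G := (Λ →₀ k) × (Λ →₀ MvPolynomial Λ k)

/-- substitution `v ↦ Σ v i • X i`. -/
def sig : (Λ →₀ k) →ₗ[k] MvPolynomial Λ k := Finsupp.linearCombination k (fun i => X i)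

variable {k Λ}

instance : LieRing (G k Λ) :=
  { (Prod.instAddCommGroup : AddCommGroup (G k Λ)) with
    bracket := fun x y => (0, sig k Λ y.1 • x.2 - sig k Λ x.1 • y.2)
    add_lie := by
      intro x y z
      show (_, _) = (_, _) + (_, _)
      ext <;> simp [map_add, add_smul, smul_add] <;> abel
    lie_add := by
      intro x y z
      show (_, _) = (_, _) + (_, _)
      ext <;> simp [map_add, add_smul, smul_add] <;> abel
    lie_self := by
      intro x
      show (_, _) = (0 : G k Λ)
      ext <;> simp
    leibniz_lie := by
      intro x y z
      show (_, _) = (_, _) + (_, _)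
      ext j <;>
        simp [map_zero, smul_sub, smul_smul, sub_smul, mul_comm] <;> ring_nf <;> abel }

lemma lie_def (x y : G k Λ) : ⁅x, y⁆ = (0, sig k Λ y.1 • x.2 - sig k Λ x.1 • y.2) := rfl

instance : LieAlgebra k (G k Λ) where
  lie_smul c x y := by
    rw [lie_def, lie_def]
    show (_, _) = ((c • (0:Λ →₀ k), _) : G k Λ)
    ext <;> simp [smul_sub, smul_comm c]

end MetaB

namespace MetaB
variable {k Λ : Type*} [Field k]

/-- generator image -/
def gen (i : Λ) : G k Λ := (Finsupp.single i 1, Finsupp.single i 1)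

lemma sig_single (i : Λ) : sig k Λ (Finsupp.single i 1) = X i := by
  simp [sig]

lemma lie_gen_gen (i j : Λ) :
    (⁅(gen i : G k Λ), gen j⁆ : G k Λ) =
      (0, Finsupp.single i (X j) - Finsupp.single j (X i)) := by
  rw [lie_def]
  simp [gen, sig_single, Finsupp.smul_single]

lemma lie_d_gen (d : Λ →₀ MvPolynomial Λ k) (c : Λ) :
    (⁅((0, d) : G k Λ), (gen c : G k Λ)⁆ : G k Λ) = (0, (X c : MvPolynomial Λ k) • d) := by
  rw [lie_def]
  simp [gen, sig_single]

lemma foldl_d (L : List Λ) (d : Λ →₀ MvPolynomial Λ k) :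
    L.foldl (fun w c => ⁅w, (gen c : G k Λ)⁆) ((0, d) : G k Λ)
      = (0, (L.map (X : Λ → MvPolynomial Λ k)).prod • d) := by
  induction L generalizing d with
  | nil => simp
  | cons a L ih =>
      rw [List.foldl_cons, lie_d_gen, ih]
      simp [smul_smul, mul_comm]

lemma lie_dd (d d' : Λ →₀ MvPolynomial Λ k) :
    (⁅((0, d) : G k Λ), ((0, d') : G k Λ)⁆ : G k Λ) = 0 := by
  rw [lie_def]
  show (_, _) = ((0 : Λ →₀ k), (0 : Λ →₀ MvPolynomial Λ k))
  simp

lemma lie_lie_lie (x y z w : G k Λ) : ⁅⁅x, y⁆, ⁅z, w⁆⁆ = (0 : G k Λ) := by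
  rw [lie_def x y, lie_def z w, lie_dd]

end MetaB

namespace MetaB
variable (k Λ : Type*) [Field k]

/-- The ideal `{x | x.1 = 0}` of `G`. -/
def KId : LieIdeal k (G k Λ) where
  carrier := {x | x.1 = 0}
  add_mem' := by intro a b ha hb; simp only [Set.mem_setOf_eq] at *; simp [ha, hb]
  zero_mem' := rfl
  smul_mem' := by intro c a ha; simp only [Set.mem_setOf_eq] at *; simp [ha]
  lie_mem := by intro x m _; show (0 : Λ →₀ k) = 0; rfl

lemma derived_one_le : LieAlgebra.derivedSeries k (G k Λ) 1 ≤ KId k Λ := by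
  rw [LieAlgebra.derivedSeries_def, show (1 : ℕ) = 0 + 1 from rfl,
    LieAlgebra.derivedSeriesOfIdeal_succ, LieAlgebra.derivedSeriesOfIdeal_zero]
  rw [LieSubmodule.lie_le_iff]
  intro x _ m _
  show (0 : Λ →₀ k) = 0
  rfl

lemma derived_two_eq_bot : LieAlgebra.derivedSeries k (G k Λ) 2 = ⊥ := by
  have h2 : LieAlgebra.derivedSeries k (G k Λ) 2 ≤ ⁅KId k Λ, KId k Λ⁆ := by
    rw [LieAlgebra.derivedSeries_def, show (2 : ℕ) = 1 + 1 from rfl,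
      LieAlgebra.derivedSeriesOfIdeal_succ]
    exact LieSubmodule.mono_lie (by rw [← LieAlgebra.derivedSeries_def]; exact derived_one_le k Λ)
      (by rw [← LieAlgebra.derivedSeries_def]; exact derived_one_le k Λ)
  rw [eq_bot_iff]
  refine le_trans h2 (le_of_eq ?_)
  rw [LieSubmodule.lie_eq_bot_iff]
  intro x hx m hm
  rw [lie_def]
  have hx' : x.1 = 0 := hx
  have hm' : m.1 = 0 := hm
  show ((0 : Λ →₀ k), _) = ((0 : Λ →₀ k), (0 : Λ →₀ MvPolynomial Λ k))
  rw [hx', hm']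
  simp

end MetaB

namespace MetaB
variable (k Λ : Type*) [Field k]

/-- The Lie algebra map from the free Lie algebra to `G`. -/
def metaHom : FreeLieAlgebra k Λ →ₗ⁅k⁆ G k Λ := FreeLieAlgebra.lift k (fun i => gen i)

lemma metaHom_ker :
    LieSubmodule.toSubmodule (LieAlgebra.derivedSeries k (FreeLieAlgebra k Λ) 2) ≤
      LinearMap.ker (metaHom k Λ).toLinearMap := by
  intro x hx
  have h1 : metaHom k Λ x ∈
      LieIdeal.map (metaHom k Λ) (LieAlgebra.derivedSeries k (FreeLieAlgebra k Λ) 2) :=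
    LieIdeal.mem_map hx
  have h2 := LieIdeal.derivedSeries_map_le (f := metaHom k Λ) 2
  have := h2 h1
  rw [derived_two_eq_bot, LieSubmodule.mem_bot] at this
  simpa using this

/-- The induced linear map on the free metabelian Lie algebra. -/
def T : FreeMetabelianLie k Λ →ₗ[k] G k Λ :=
  Submodule.liftQ (LieSubmodule.toSubmodule (LieAlgebra.derivedSeries k (FreeLieAlgebra k Λ) 2))
    (metaHom k Λ).toLinearMap (metaHom_ker k Λ)

lemma T_mk (x : FreeLieAlgebra k Λ) :
    T k Λ (LieSubmodule.Quotient.mk' (LieAlgebra.derivedSeries k (FreeLieAlgebra k Λ) 2) x)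
      = metaHom k Λ x := rfl

end MetaB

namespace MetaB
variable {k Λ : Type*} [Field k] [LinearOrder Λ]

/-- exponent finsupp of a list of variables -/
def expOf (L : List Λ) : Λ →₀ ℕ := Multiset.toFinsupp (L : Multiset Λ)

lemma expOf_cons (a : Λ) (L : List Λ) :
    expOf (a :: L) = Finsupp.single a 1 + expOf L := by
  rw [expOf, expOf, ← Multiset.cons_coe, ← Multiset.singleton_add, map_add,
    Multiset.toFinsupp_singleton]

lemma prodX (L : List Λ) :
    (L.map (X : Λ → MvPolynomial Λ k)).prod = monomial (expOf L) 1 := by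
  induction L with
  | nil => simp [expOf]
  | cons a L ih =>
      rw [List.map_cons, List.prod_cons, ih, expOf_cons, X, monomial_mul, one_mul]

lemma expOf_inj {L L' : List Λ} (h : expOf L = expOf L') : (L : Multiset Λ) = L' :=
  Multiset.toFinsupp.injective h

lemma expOf_cons_ne_zero (a : Λ) (L : List Λ) : expOf (a :: L) ≠ 0 := by
  intro h
  have := DFunLike.congr_fun h a
  rw [expOf, ← Multiset.cons_coe, Multiset.toFinsupp_apply] at this
  simp at this

end MetaB


namespace MetaB
variable {k Λ : Type*} [Field k] [LinearOrder Λ]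

/-- the target family in `G` -/
noncomputable def bFam : NormIdx Λ → G k Λ
  | Sum.inl i => gen i
  | Sum.inr p =>
      (0, Finsupp.single p.val.1 (monomial (expOf (p.val.2.1 :: p.val.2.2)) (1 : k))
        - Finsupp.single p.val.2.1 (monomial (expOf (p.val.1 :: p.val.2.2)) (1 : k)))

/-- the dual family of functionals -/
noncomputable def phi : NormIdx Λ → (G k Λ →ₗ[k] k)
  | Sum.inl i => (Finsupp.lapply i).comp (LinearMap.fst k (Λ →₀ k) (Λ →₀ MvPolynomial Λ k))
  | Sum.inr p => (lcoeff k (expOf (p.val.2.1 :: p.val.2.2))).comp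
      ((Finsupp.lapply p.val.1).comp (LinearMap.snd k (Λ →₀ k) (Λ →₀ MvPolynomial Λ k)))

open scoped Classical in
lemma phi_b (q q' : NormIdx Λ) :
    phi q (bFam q' : G k Λ) = if q = q' then 1 else 0 := by
  cases q with
  | inl i =>
      cases q' with
      | inl i' =>
          simp only [phi, bFam, gen, LinearMap.comp_apply, LinearMap.fst_apply,
            Finsupp.lapply_apply, Finsupp.single_apply, Sum.inl.injEq]
          by_cases h : i = i'
          · subst h; simp; rfl
          · have h2 : Sum.inl i ≠ (Sum.inl i' : NormIdx Λ) := by simp [h]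
            rw [if_neg (fun hh => h hh.symm)]; exact (if_neg h2).symm
      | inr p =>
          simp [phi, bFam]
  | inr p =>
      obtain ⟨⟨i, j, L⟩, hj, hs⟩ := p
      cases q' with
      | inl i' =>
          simp only [phi, bFam, gen, LinearMap.comp_apply, LinearMap.snd_apply,
            Finsupp.lapply_apply, Finsupp.single_apply, lcoeff_apply]
          by_cases h : i' = i
          · rw [if_pos h, coeff_one, if_neg (fun hh => expOf_cons_ne_zero j L hh.symm),
              if_neg (by simp)]
          · rw [if_neg h, coeff_zero, if_neg (by simp)]
      | inr p' =>
          obtain ⟨⟨i', j', L'⟩, hj', hs'⟩ := p'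
          simp only [phi, bFam, LinearMap.comp_apply, LinearMap.snd_apply,
            Finsupp.lapply_apply, lcoeff_apply, Finsupp.sub_apply, map_sub,
            Finsupp.single_apply, apply_ite (coeff (expOf (j :: L))), map_zero,
            coeff_monomial, coeff_zero]
          have hB : (if j' = i then (if expOf (i' :: L') = expOf (j :: L) then (1:k) else 0)
              else 0) = 0 := by
            by_cases h1 : j' = i
            · rw [if_pos h1]
              rw [if_neg]
              intro he
              have hmul : ((i' :: L' : List Λ) : Multiset Λ) = ((j :: L : List Λ) : Multiset Λ) :=
                expOf_inj he
              have hjmem : j ∈ ((i' :: L' : List Λ) : Multiset Λ) := by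
                rw [hmul, Multiset.mem_coe]
                exact List.mem_cons_self
              rw [Multiset.mem_coe, List.mem_cons] at hjmem
              rcases hjmem with h2 | h2
              · subst h2
                exact absurd (h1 ▸ hj'.trans hj) (lt_irrefl _)
              · have : j' ≤ j := (List.pairwise_cons.mp hs').1 j h2
                rw [h1] at this
                exact absurd (lt_of_le_of_lt this hj) (lt_irrefl _)
            · rw [if_neg h1]
          rw [hB, sub_zero]
          by_cases h1 : i' = i
          · by_cases h2 : expOf (j' :: L') = expOf (j :: L)
            · have hperm : (j' :: L') = (j :: L) := by
                exact List.Perm.eq_of_pairwise' hs' hs (Multiset.coe_eq_coe.mp (expOf_inj h2))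
              obtain ⟨rfl, rfl⟩ : j' = j ∧ L' = L := by
                injection hperm with a b; exact ⟨a, b⟩
              subst h1
              simp; rfl
            · rw [if_pos h1, if_neg h2, if_neg]
              intro hq
              apply h2
              obtain ⟨rfl, rfl, rfl⟩ : i = i' ∧ j = j' ∧ L = L' := by
                injection hq with hq
                rw [Subtype.mk.injEq, Prod.mk.injEq, Prod.mk.injEq] at hq
                exact ⟨hq.1, hq.2.1, hq.2.2⟩
              rfl
          · rw [if_neg h1, if_neg]
            intro hq
            apply h1
            injection hq with hq
            rw [Subtype.mk.injEq, Prod.mk.injEq] at hq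
            exact hq.1.symm

end MetaB


namespace MetaB
variable (k : Type*) {Λ : Type*} [Field k] [LinearOrder Λ]

/-- quotient map as a Lie algebra hom -/
def mkL : FreeLieAlgebra k Λ →ₗ⁅k⁆ FreeMetabelianLie k Λ where
  toLinearMap :=
    (LieSubmodule.toSubmodule (LieAlgebra.derivedSeries k (FreeLieAlgebra k Λ) 2)).mkQ
  map_lie' := by
    intro x y
    exact (LieSubmodule.Quotient.mk_bracket _ _ _)

lemma fmGen_eq (i : Λ) : fmGen k i = mkL k (FreeLieAlgebra.of k i) := rfl

lemma T_mkL (x : FreeLieAlgebra k Λ) : T k Λ (mkL k x) = metaHom k Λ x := rfl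

lemma foldl_mk (L : List Λ) (x : FreeLieAlgebra k Λ) :
    L.foldl (fun w c => ⁅w, fmGen k c⁆) (mkL k x) =
      mkL k (L.foldl (fun w c => ⁅w, FreeLieAlgebra.of k c⁆) x) := by
  induction L generalizing x with
  | nil => rfl
  | cons a L ih =>
      rw [List.foldl_cons, List.foldl_cons, fmGen_eq, ← LieHom.map_lie, ih]

lemma metaHom_of (i : Λ) : metaHom k Λ (FreeLieAlgebra.of k i) = gen i :=
  FreeLieAlgebra.lift_of_apply _ _

lemma metaHom_foldl (L : List Λ) (x : FreeLieAlgebra k Λ) :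
    metaHom k Λ (L.foldl (fun w c => ⁅w, FreeLieAlgebra.of k c⁆) x) =
      L.foldl (fun w c => ⁅w, (gen c : G k Λ)⁆) (metaHom k Λ x) := by
  induction L generalizing x with
  | nil => rfl
  | cons a L ih =>
      rw [List.foldl_cons, List.foldl_cons, ih, LieHom.map_lie, metaHom_of]

lemma mono_mul_X (j : Λ) (L : List Λ) :
    (monomial (expOf L) (1 : k)) * X j = monomial (expOf (j :: L)) (1 : k) := by
  rw [X, monomial_mul, mul_one, expOf_cons, add_comm]

lemma T_normMono : (T k Λ) ∘ (normMono k Λ) = bFam := by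
  funext q
  cases q with
  | inl i =>
      show T k Λ (fmGen k i) = gen i
      rw [fmGen_eq, T_mkL, metaHom_of]
  | inr p =>
      obtain ⟨⟨i, j, L⟩, hj, hs⟩ := p
      show T k Λ (L.foldl (fun w c => ⁅w, fmGen k c⁆) ⁅fmGen k i, fmGen k j⁆) = _
      rw [fmGen_eq, fmGen_eq, ← LieHom.map_lie, foldl_mk, T_mkL, metaHom_foldl,
        LieHom.map_lie, metaHom_of, metaHom_of, lie_gen_gen, foldl_d, prodX]
      show ((0 : Λ →₀ k), _) = ((0 : Λ →₀ k), _)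
      rw [Prod.mk.injEq]
      refine ⟨rfl, ?_⟩
      rw [smul_sub, Finsupp.smul_single, Finsupp.smul_single, smul_eq_mul, smul_eq_mul,
        mono_mul_X, mono_mul_X]

open scoped Classical in
lemma bIndep : LinearIndependent k (bFam : NormIdx Λ → G k Λ) := by
  rw [linearIndependent_iff]
  intro l hl
  ext q
  have h := congrArg (phi q) hl
  rw [map_zero, Finsupp.linearCombination_apply, map_finsuppSum] at h
  have h2 : (l.sum fun q' c => phi q (c • bFam q')) = l.sum fun q' c => if q = q' then c else 0 := by
    apply Finsupp.sum_congr
    intro q' _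
    rw [map_smul, phi_b, smul_ite, smul_eq_mul, mul_one, smul_zero]
  rw [h2, Finsupp.sum_ite_eq] at h
  by_cases hq : q ∈ l.support
  · rw [if_pos hq] at h; simpa using h
  · rw [Finsupp.notMem_support_iff] at hq; simpa using hq

lemma normMono_indep : LinearIndependent k (normMono k Λ) :=
  LinearIndependent.of_comp (T k Λ) (by rw [T_normMono]; exact bIndep k)

end MetaB


namespace MetaB
variable (k : Type*) {Λ : Type*} [Field k] [LinearOrder Λ]

/-- iterated bracketing with generators -/
def brkt (x : FreeMetabelianLie k Λ) (L : List Λ) : FreeMetabelianLie k Λ :=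
  L.foldl (fun w c => ⁅w, fmGen k c⁆) x

lemma brkt_cons (x : FreeMetabelianLie k Λ) (a : Λ) (L : List Λ) :
    brkt k x (a :: L) = brkt k ⁅x, fmGen k a⁆ L := rfl

lemma brkt_zero (L : List Λ) : brkt k (0 : FreeMetabelianLie k Λ) L = 0 := by
  induction L with
  | nil => rfl
  | cons a L ih => rw [brkt_cons, zero_lie]; exact ih

lemma brkt_neg (x : FreeMetabelianLie k Λ) (L : List Λ) :
    brkt k (-x) L = -brkt k x L := by
  induction L generalizing x with
  | nil => rfl
  | cons a L ih => rw [brkt_cons, neg_lie, ih, brkt_cons]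

lemma brkt_sub (x y : FreeMetabelianLie k Λ) (L : List Λ) :
    brkt k (x - y) L = brkt k x L - brkt k y L := by
  induction L generalizing x y with
  | nil => rfl
  | cons a L ih => rw [brkt_cons, sub_lie, ih, brkt_cons, brkt_cons]

lemma metab (x y z w : FreeMetabelianLie k Λ) : ⁅⁅x, y⁆, ⁅z, w⁆⁆ = 0 := by
  obtain ⟨a, rfl⟩ := LieSubmodule.Quotient.surjective_mk'
    (LieAlgebra.derivedSeries k (FreeLieAlgebra k Λ) 2) x
  obtain ⟨b, rfl⟩ := LieSubmodule.Quotient.surjective_mk'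
    (LieAlgebra.derivedSeries k (FreeLieAlgebra k Λ) 2) y
  obtain ⟨c, rfl⟩ := LieSubmodule.Quotient.surjective_mk'
    (LieAlgebra.derivedSeries k (FreeLieAlgebra k Λ) 2) z
  obtain ⟨d, rfl⟩ := LieSubmodule.Quotient.surjective_mk'
    (LieAlgebra.derivedSeries k (FreeLieAlgebra k Λ) 2) w
  have step : ∀ u v : FreeLieAlgebra k Λ,
      (⁅LieSubmodule.Quotient.mk' (LieAlgebra.derivedSeries k (FreeLieAlgebra k Λ) 2) u,
        LieSubmodule.Quotient.mk' (LieAlgebra.derivedSeries k (FreeLieAlgebra k Λ) 2) v⁆ =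
        LieSubmodule.Quotient.mk' (LieAlgebra.derivedSeries k (FreeLieAlgebra k Λ) 2) ⁅u, v⁆) :=
    fun u v => (LieSubmodule.Quotient.mk_bracket _ _ _).symm
  rw [step, step, step, LieSubmodule.Quotient.mk_eq_zero]
  have hmem : ⁅⁅a, b⁆, ⁅c, d⁆⁆ ∈ LieAlgebra.derivedSeries k (FreeLieAlgebra k Λ) 2 := by
    rw [LieAlgebra.derivedSeries_def, show (2 : ℕ) = 1 + 1 from rfl,
      LieAlgebra.derivedSeriesOfIdeal_succ, show (1 : ℕ) = 0 + 1 from rfl,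
      LieAlgebra.derivedSeriesOfIdeal_succ, LieAlgebra.derivedSeriesOfIdeal_zero]
    exact LieSubmodule.lie_mem_lie
      (LieSubmodule.lie_mem_lie (LieSubmodule.mem_top a) (LieSubmodule.mem_top b))
      (LieSubmodule.lie_mem_lie (LieSubmodule.mem_top c) (LieSubmodule.mem_top d))
  exact hmem

lemma swap_tail (x y a b : FreeMetabelianLie k Λ) :
    ⁅⁅⁅x, y⁆, a⁆, b⁆ = ⁅⁅⁅x, y⁆, b⁆, a⁆ := by
  have h := leibniz_lie ⁅x, y⁆ a b
  rw [metab, ← lie_skew a ⁅⁅x, y⁆, b⁆, ← sub_eq_add_neg] at h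
  exact sub_eq_zero.mp h.symm

lemma brkt_perm {L L' : List Λ} (h : L.Perm L') (x y : FreeMetabelianLie k Λ) :
    brkt k ⁅x, y⁆ L = brkt k ⁅x, y⁆ L' := by
  induction h generalizing x y with
  | nil => rfl
  | cons a _ ih => rw [brkt_cons, brkt_cons]; exact ih _ _
  | swap a b l => rw [brkt_cons, brkt_cons, brkt_cons, brkt_cons, swap_tail]
  | trans _ _ ih1 ih2 => rw [ih1, ih2]

lemma jacobi_step (i j c : Λ) (L : List Λ) :
    brkt k ⁅fmGen k i, fmGen k j⁆ (c :: L) =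
      brkt k ⁅fmGen k i, fmGen k c⁆ (j :: L) - brkt k ⁅fmGen k j, fmGen k c⁆ (i :: L) := by
  rw [brkt_cons, brkt_cons, brkt_cons, ← brkt_sub]
  congr 1
  rw [lie_lie, show ⁅⁅fmGen k i, fmGen k c⁆, fmGen k j⁆
      = -⁅fmGen k j, ⁅fmGen k i, fmGen k c⁆⁆ from (lie_skew _ _).symm,
    show ⁅⁅fmGen k j, fmGen k c⁆, fmGen k i⁆
      = -⁅fmGen k i, ⁅fmGen k j, fmGen k c⁆⁆ from (lie_skew _ _).symm]
  abel

end MetaB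


namespace MetaB
variable (k : Type*) {Λ : Type*} [Field k] [LinearOrder Λ]

lemma brkt_append_single (x : FreeMetabelianLie k Λ) (L : List Λ) (a : Λ) :
    brkt k x (L ++ [a]) = ⁅brkt k x L, fmGen k a⁆ := by
  rw [brkt, List.foldl_append]
  rfl

lemma sorted_insert_case (a c d : Λ) (L : List Λ) (hca : c < a) (hcd : c ≤ d)
    (hcL : ∀ b ∈ L, c ≤ b) :
    brkt k ⁅fmGen k a, fmGen k c⁆ (d :: L) ∈
      Submodule.span k (Set.range (normMono k Λ)) := by
  rw [brkt_perm k (List.perm_insertionSort (· ≤ ·) (d :: L)).symm]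
  refine Submodule.subset_span
    ⟨Sum.inr ⟨(a, c, List.insertionSort (· ≤ ·) (d :: L)), hca, ?_⟩, rfl⟩
  refine List.pairwise_cons.mpr ⟨?_, List.pairwise_insertionSort _ _⟩
  intro b hb
  have hb' : b ∈ d :: L := ((List.perm_insertionSort (· ≤ ·) (d :: L)).mem_iff).mp hb
  rcases List.mem_cons.mp hb' with rfl | hb'
  · exact hcd
  · exact hcL b hb'

lemma sorted_case (i j : Λ) (M : List Λ) (hs : M.Pairwise (· ≤ ·)) (hj : j < i) :
    brkt k ⁅fmGen k i, fmGen k j⁆ M ∈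
      Submodule.span k (Set.range (normMono k Λ)) := by
  cases M with
  | nil =>
      exact Submodule.subset_span ⟨Sum.inr ⟨(i, j, []), hj, List.pairwise_singleton _ j⟩, rfl⟩
  | cons c L =>
      by_cases hjc : j ≤ c
      · refine Submodule.subset_span ⟨Sum.inr ⟨(i, j, c :: L), hj, ?_⟩, rfl⟩
        refine List.pairwise_cons.mpr ⟨?_, hs⟩
        intro b hb
        rcases List.mem_cons.mp hb with rfl | hb
        · exact hjc
        · exact le_trans hjc ((List.pairwise_cons.mp hs).1 b hb)
      · push_neg at hjc
        rw [jacobi_step]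
        have hcL : ∀ b ∈ L, c ≤ b := (List.pairwise_cons.mp hs).1
        exact Submodule.sub_mem _
          (sorted_insert_case k i c j L (lt_trans hjc hj) (le_of_lt hjc) hcL)
          (sorted_insert_case k j c i L hjc (le_of_lt (lt_trans hjc hj)) hcL)

lemma B_mem_span (i j : Λ) (L : List Λ) :
    brkt k ⁅fmGen k i, fmGen k j⁆ L ∈
      Submodule.span k (Set.range (normMono k Λ)) := by
  rw [brkt_perm k (List.perm_insertionSort (· ≤ ·) L).symm]
  rcases lt_trichotomy j i with h | h | h
  · exact sorted_case k i j _ (List.pairwise_insertionSort _ _) h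
  · rw [h, show ⁅fmGen k i, fmGen k i⁆ = (0 : FreeMetabelianLie k Λ) from lie_self _, brkt_zero]
    exact Submodule.zero_mem _
  · rw [show ⁅fmGen k i, fmGen k j⁆ = -⁅fmGen k j, fmGen k i⁆ from (lie_skew _ _).symm,
      brkt_neg]
    exact Submodule.neg_mem _ (sorted_case k j i _ (List.pairwise_insertionSort _ _) h)

lemma brkt_bracket_form (x y : FreeMetabelianLie k Λ) (L : List Λ) :
    ∃ u v : FreeMetabelianLie k Λ, brkt k ⁅x, y⁆ L = ⁅u, v⁆ := by
  induction L generalizing x y with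
  | nil => exact ⟨x, y, rfl⟩
  | cons a L ih => rw [brkt_cons]; exact ih _ _

lemma lie_range_mem (m m' : FreeMetabelianLie k Λ)
    (hm : m ∈ Set.range (normMono k Λ)) (hm' : m' ∈ Set.range (normMono k Λ)) :
    ⁅m, m'⁆ ∈ Submodule.span k (Set.range (normMono k Λ)) := by
  obtain ⟨q, rfl⟩ := hm
  obtain ⟨q', rfl⟩ := hm'
  cases q with
  | inl i =>
      cases q' with
      | inl i' => exact B_mem_span k i i' []
      | inr p =>
          obtain ⟨⟨i', j', L'⟩, h'⟩ := p
          have he : ⁅normMono k Λ (Sum.inl i), normMono k Λ (Sum.inr ⟨(i', j', L'), h'⟩)⁆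
              = -brkt k ⁅fmGen k i', fmGen k j'⁆ (L' ++ [i]) := by
            rw [brkt_append_single, ← lie_skew]
            rfl
          rw [he]
          exact Submodule.neg_mem _ (B_mem_span k i' j' (L' ++ [i]))
  | inr p =>
      obtain ⟨⟨i', j', L'⟩, h'⟩ := p
      cases q' with
      | inl i =>
          have he : ⁅normMono k Λ (Sum.inr ⟨(i', j', L'), h'⟩), normMono k Λ (Sum.inl i)⁆
              = brkt k ⁅fmGen k i', fmGen k j'⁆ (L' ++ [i]) := by
            rw [brkt_append_single]
            rfl
          rw [he]
          exact B_mem_span k i' j' (L' ++ [i])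
      | inr p' =>
          obtain ⟨⟨i2, j2, L2⟩, h2⟩ := p'
          obtain ⟨u, v, hu⟩ := brkt_bracket_form k (fmGen k i') (fmGen k j') L'
          obtain ⟨u2, v2, hu2⟩ := brkt_bracket_form k (fmGen k i2) (fmGen k j2) L2
          have he1 : normMono k Λ (Sum.inr ⟨(i', j', L'), h'⟩) = ⁅u, v⁆ := hu
          have he2 : normMono k Λ (Sum.inr ⟨(i2, j2, L2), h2⟩) = ⁅u2, v2⁆ := hu2
          rw [he1, he2, metab]
          exact Submodule.zero_mem _

lemma S_lie_closed {x y : FreeMetabelianLie k Λ}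
    (hx : x ∈ Submodule.span k (Set.range (normMono k Λ)))
    (hy : y ∈ Submodule.span k (Set.range (normMono k Λ))) :
    ⁅x, y⁆ ∈ Submodule.span k (Set.range (normMono k Λ)) := by
  induction hx, hy using Submodule.span_induction₂ with
  | mem_mem a b ha hb => exact lie_range_mem k a b ha hb
  | zero_left b hb => rw [zero_lie]; exact Submodule.zero_mem _
  | zero_right a ha => rw [lie_zero]; exact Submodule.zero_mem _
  | add_left a b c _ _ _ h1 h2 => rw [add_lie]; exact Submodule.add_mem _ h1 h2
  | add_right a b c _ _ _ h1 h2 => rw [lie_add]; exact Submodule.add_mem _ h1 h2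
  | smul_left r a b _ _ h => rw [smul_lie]; exact Submodule.smul_mem _ r h
  | smul_right r a b _ _ h => rw [lie_smul]; exact Submodule.smul_mem _ r h

lemma lieSpan_of_top :
    LieSubalgebra.lieSpan k (FreeLieAlgebra k Λ) (Set.range (FreeLieAlgebra.of k)) = ⊤ := by
  rw [eq_top_iff]
  rintro y -
  let P := LieSubalgebra.lieSpan k (FreeLieAlgebra k Λ) (Set.range (FreeLieAlgebra.of k))
  let f : FreeLieAlgebra k Λ →ₗ⁅k⁆ P :=
    FreeLieAlgebra.lift k (fun x => ⟨FreeLieAlgebra.of k x,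
      LieSubalgebra.subset_lieSpan (Set.mem_range_self x)⟩)
  have hcomp : P.incl.comp f = LieHom.id := by
    apply FreeLieAlgebra.hom_ext
    intro x
    show P.incl (f (FreeLieAlgebra.of k x)) = FreeLieAlgebra.of k x
    rw [show f (FreeLieAlgebra.of k x) = ⟨FreeLieAlgebra.of k x,
      LieSubalgebra.subset_lieSpan (Set.mem_range_self x)⟩ from FreeLieAlgebra.lift_of_apply _ _]
    rfl
  have hy : P.incl (f y) = y := by
    have h := DFunLike.congr_fun hcomp y
    simpa using h
  rw [← hy]
  exact (f y).2

lemma span_top :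
    Submodule.span k (Set.range (normMono k Λ)) = ⊤ := by
  rw [eq_top_iff]
  rintro z -
  obtain ⟨y, rfl⟩ := LieSubmodule.Quotient.surjective_mk'
    (LieAlgebra.derivedSeries k (FreeLieAlgebra k Λ) 2) z
  let K' : LieSubalgebra k (FreeLieAlgebra k Λ) :=
    { Submodule.comap (mkL k).toLinearMap (Submodule.span k (Set.range (normMono k Λ))) with
      lie_mem' := fun {x y} hx hy => by
        show mkL k ⁅x, y⁆ ∈ Submodule.span k (Set.range (normMono k Λ))
        rw [LieHom.map_lie]
        exact S_lie_closed k hx hy }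
  have hle : LieSubalgebra.lieSpan k (FreeLieAlgebra k Λ) (Set.range (FreeLieAlgebra.of k))
      ≤ K' := by
    rw [LieSubalgebra.lieSpan_le]
    rintro _ ⟨i, rfl⟩
    show mkL k (FreeLieAlgebra.of k i) ∈ Submodule.span k (Set.range (normMono k Λ))
    exact Submodule.subset_span ⟨Sum.inl i, rfl⟩
  have hyK : y ∈ K' := hle (by rw [lieSpan_of_top]; exact LieSubalgebra.mem_top y)
  exact hyK

end MetaB


/-- The normalised monomials form a linear basis of the free metabelian Lie algebra over
a field `k`: they are linearly independent and span. -/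
theorem normMono_is_basis (k Λ : Type*) [Field k] [LinearOrder Λ] :
    LinearIndependent k (normMono k Λ) ∧
    Submodule.span k (Set.range (normMono k Λ)) = ⊤ :=
  ⟨MetaB.normMono_indep k, MetaB.span_top k⟩
end
end

section
/- Let k be a field, let X be a type with at least two elements, and let F = F(k, X) be the free metabelian Lie algebra on X over k (which is then non-abelian). Then the Fitting radical of F equals its derived ideal: Fit(F) = ⁅F, F⁆. -/
namespace FMAux
open Polynomial

variable {k : Type*} [Field k]

attribute [local instance] LieRing.ofAssociativeRing

def Wit (k : Type*) [Field k] : Type _ := k × Polynomial k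

noncomputable instance : AddCommGroup (Wit k) := inferInstanceAs (AddCommGroup (k × Polynomial k))
noncomputable instance : Module k (Wit k) := inferInstanceAs (Module k (k × Polynomial k))

lemma wit_add_fst (x y : Wit k) : (x + y).1 = x.1 + y.1 := rfl
lemma wit_add_snd (x y : Wit k) : (x + y).2 = x.2 + y.2 := rfl
lemma wit_smul_fst (t : k) (x : Wit k) : (t • x).1 = t * x.1 := rfl
lemma wit_smul_snd (t : k) (x : Wit k) : (t • x).2 = t • x.2 := rfl
lemma wit_zero_fst : (0 : Wit k).1 = 0 := rfl
lemma wit_zero_snd : (0 : Wit k).2 = 0 := rfl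

noncomputable instance : LieRing (Wit k) where
  bracket x y := (0, x.1 • (X * y.2) - y.1 • (X * x.2))
  add_lie x y z := by
    refine Prod.ext ?_ ?_
    · show (0 : k) = _
      exact (add_zero (0 : k)).symm
    · show (x + y).1 • (X * z.2) - z.1 • (X * (x + y).2) = _
      rw [wit_add_snd, wit_add_fst]
      show _ = (x.1 • (X * z.2) - z.1 • (X * x.2)) + (y.1 • (X * z.2) - z.1 • (X * y.2))
      simp only [smul_eq_C_mul, map_add]
      ring
  lie_add x y z := by
    refine Prod.ext ?_ ?_
    · show (0 : k) = _
      exact (add_zero (0 : k)).symm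
    · show x.1 • (X * (y + z).2) - (y + z).1 • (X * x.2) = _
      rw [wit_add_snd, wit_add_fst]
      show _ = (x.1 • (X * y.2) - y.1 • (X * x.2)) + (x.1 • (X * z.2) - z.1 • (X * x.2))
      simp only [smul_eq_C_mul, map_add]
      ring
  lie_self x := by
    refine Prod.ext ?_ ?_
    · rfl
    · show x.1 • (X * x.2) - x.1 • (X * x.2) = (0 : Wit k).2
      rw [wit_zero_snd]; ring
  leibniz_lie x y z := by
    refine Prod.ext ?_ ?_
    · show (0 : k) = _
      exact (add_zero (0 : k)).symm
    · show x.1 • (X * (y.1 • (X * z.2) - z.1 • (X * y.2))) - (0 : k) • (X * x.2) = _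
      show _ = ((0 : k) • (X * z.2) - z.1 • (X * (x.1 • (X * y.2) - y.1 • (X * x.2)))) +
          (y.1 • (X * (x.1 • (X * z.2) - z.1 • (X * x.2))) - (0 : k) • (X * y.2))
      simp only [smul_eq_C_mul, map_zero]
      ring

noncomputable instance : LieAlgebra k (Wit k) where
  lie_smul t x y := by
    refine Prod.ext ?_ ?_
    · rw [wit_smul_fst]
      show (0 : k) = t * 0
      ring
    · rw [wit_smul_snd]
      show x.1 • (X * (t • y).2) - (t • y).1 • (X * x.2) =
        t • (x.1 • (X * y.2) - y.1 • (X * x.2))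
      rw [wit_smul_snd, wit_smul_fst]
      simp only [smul_eq_C_mul, smul_eq_mul, map_mul]
      ring

lemma wit_bracket (x y : Wit k) :
    ⁅x, y⁆ = ((0 : k), x.1 • (X * y.2) - y.1 • (X * x.2)) := rfl

/-- the first-coordinate Lie algebra homomorphism `Wit k → k`. -/
noncomputable def fstHom (k : Type*) [Field k] : Wit k →ₗ⁅k⁆ k where
  toFun x := x.1
  map_add' := wit_add_fst
  map_smul' t x := by
    show (t • x).1 = (RingHom.id k) t • x.1
    rw [wit_smul_fst]; simp
  map_lie' {x y} := by
    show (0 : k) = ⁅x.1, y.1⁆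
    rw [LieRing.of_associative_ring_bracket]
    ring

/-- the derived ideal of `k` (as an abelian Lie algebra over itself) is trivial. -/
lemma derivedSeries_k_one : LieAlgebra.derivedSeries k k 1 = ⊥ := by
  rw [eq_bot_iff, LieAlgebra.derivedSeries_def, LieAlgebra.derivedSeriesOfIdeal_succ,
    LieAlgebra.derivedSeriesOfIdeal_zero, LieSubmodule.lie_le_iff]
  intro x _ y _
  rw [LieSubmodule.mem_bot, LieRing.of_associative_ring_bracket]
  ring

/-- any Lie algebra map to `k` kills the derived ideal. -/
lemma lieHom_to_k_derived_zero {L : Type*} [LieRing L] [LieAlgebra k L] (f : L →ₗ⁅k⁆ k)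
    {d : L} (hd : d ∈ LieAlgebra.derivedSeries k L 1) : f d = 0 := by
  have h1 := LieIdeal.derivedSeries_map_le (f := f) 1
  have h2 := h1 (LieIdeal.mem_map hd)
  rwa [derivedSeries_k_one, LieSubmodule.mem_bot] at h2

lemma wit_derived_fst {u : Wit k} (hu : u ∈ LieAlgebra.derivedSeries k (Wit k) 1) :
    u.1 = 0 :=
  lieHom_to_k_derived_zero (fstHom k) hu

lemma wit_derived_two : LieAlgebra.derivedSeries k (Wit k) 2 = ⊥ := by
  rw [eq_bot_iff, LieAlgebra.derivedSeries_def, LieAlgebra.derivedSeriesOfIdeal_succ,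
    LieSubmodule.lie_le_iff]
  intro x hx y hy
  rw [LieSubmodule.mem_bot, wit_bracket, wit_derived_fst hx, wit_derived_fst hy]
  refine Prod.ext rfl ?_
  rw [wit_zero_snd]
  simp

section Quot

variable {L : Type*} [LieRing L] [LieAlgebra k L] {g : Type*} [LieRing g] [LieAlgebra k g]

/-- quotient map as a Lie algebra homomorphism. -/
def lieQuotMk (I : LieIdeal k L) : L →ₗ⁅k⁆ L ⧸ I :=
  { (I : Submodule k L).mkQ with map_lie' := fun {_ _} => rfl }

lemma lieQuotMk_apply (I : LieIdeal k L) (x : L) :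
    lieQuotMk I x = LieSubmodule.Quotient.mk' I x := rfl

lemma lieQuotMk_surjective (I : LieIdeal k L) : Function.Surjective (lieQuotMk I) :=
  fun y => Quotient.inductionOn' y fun x => ⟨x, rfl⟩

/-- lifting a Lie algebra homomorphism to the quotient. -/
def lieQuotLift (I : LieIdeal k L) (f : L →ₗ⁅k⁆ g) (h : ∀ x ∈ I, f x = 0) :
    (L ⧸ I) →ₗ⁅k⁆ g :=
  { (I : Submodule k L).liftQ f.toLinearMap (fun x hx => h x hx) with
    map_lie' := fun {x y} => by
      obtain ⟨x, rfl⟩ := lieQuotMk_surjective I x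
      obtain ⟨y, rfl⟩ := lieQuotMk_surjective I y
      show Submodule.liftQ _ _ _ ⁅lieQuotMk I x, lieQuotMk I y⁆ = _
      rw [← LieHom.map_lie (lieQuotMk I) x y]
      show f ⁅x, y⁆ = ⁅f x, f y⁆
      exact f.map_lie x y }

lemma lieQuotLift_mk (I : LieIdeal k L) (f : L →ₗ⁅k⁆ g) (h : ∀ x ∈ I, f x = 0) (x : L) :
    lieQuotLift I f h (lieQuotMk I x) = f x := rfl

end Quot

section Free

variable {k : Type*} [Field k] {X : Type*}

open FreeLieAlgebra

/-- every element of the free Lie algebra lies in the span of the generators plus the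
derived ideal. -/
lemma free_mem_span_sup (z : FreeLieAlgebra k X) :
    z ∈ Submodule.span k (Set.range (FreeLieAlgebra.of k (X := X))) ⊔
      (LieAlgebra.derivedSeries k (FreeLieAlgebra k X) 1 : Submodule k (FreeLieAlgebra k X)) := by
  set P : Submodule k (FreeLieAlgebra k X) :=
    Submodule.span k (Set.range (FreeLieAlgebra.of k (X := X))) ⊔
      (LieAlgebra.derivedSeries k (FreeLieAlgebra k X) 1 : Submodule k (FreeLieAlgebra k X))
    with hP
  let S : LieSubalgebra k (FreeLieAlgebra k X) :=
    { P with
      lie_mem' := fun {x y} _ _ => by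
        apply Submodule.mem_sup_right
        show ⁅x, y⁆ ∈ LieAlgebra.derivedSeriesOfIdeal k (FreeLieAlgebra k X) (0 + 1) ⊤
        rw [LieAlgebra.derivedSeriesOfIdeal_succ, LieAlgebra.derivedSeriesOfIdeal_zero]
        exact LieSubmodule.lie_mem_lie (LieSubmodule.mem_top x) (LieSubmodule.mem_top y) }
  have hmem : ∀ x : X, FreeLieAlgebra.of k x ∈ S := fun x =>
    Submodule.mem_sup_left (Submodule.subset_span ⟨x, rfl⟩)
  let g : FreeLieAlgebra k X →ₗ⁅k⁆ S :=
    FreeLieAlgebra.lift k fun x => (⟨FreeLieAlgebra.of k x, hmem x⟩ : S)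
  have hcomp : S.incl.comp g = LieHom.id := by
    apply FreeLieAlgebra.hom_ext
    intro x
    rw [LieHom.comp_apply, FreeLieAlgebra.lift_of_apply]
    rfl
  have hz : S.incl (g z) = z := by rw [← LieHom.comp_apply, hcomp]; rfl
  have : z ∈ S := by rw [← hz]; exact (g z).2
  exact this

/-- the coordinate functional at `x₀`. -/
noncomputable def psi (x₀ : X) : FreeLieAlgebra k X →ₗ⁅k⁆ k :=
  letI := Classical.decEq X
  FreeLieAlgebra.lift k fun x => if x = x₀ then (1 : k) else 0

lemma exists_psi_ne_zero {a : FreeLieAlgebra k X}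
    (ha : a ∉ LieAlgebra.derivedSeries k (FreeLieAlgebra k X) 1) :
    ∃ x₀ : X, psi (k := k) x₀ a ≠ 0 := by
  classical
  by_contra h
  push_neg at h
  apply ha
  obtain ⟨s, hs, d, hd, rfl⟩ := Submodule.mem_sup.mp (free_mem_span_sup a)
  replace hd : d ∈ LieAlgebra.derivedSeries k (FreeLieAlgebra k X) 1 := hd
  suffices hs0 : s = 0 by
    rw [hs0, zero_add]; exact hd
  obtain ⟨c, rfl⟩ := (Finsupp.mem_span_range_iff_exists_finsupp).mp hs
  have hc : ∀ x₀ : X, c x₀ = 0 := by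
    intro x₀
    have h0 : (psi (k := k) x₀).toLinearMap ((c.sum fun i a => a • FreeLieAlgebra.of k i) + d)
        = 0 := h x₀
    have hpd : (psi (k := k) x₀).toLinearMap d = 0 := lieHom_to_k_derived_zero _ hd
    rw [map_add, hpd, add_zero, map_finsuppSum] at h0
    have heq : (c.sum fun x t => (psi (k := k) x₀).toLinearMap (t • FreeLieAlgebra.of k x)) =
        c.sum fun x t => if x = x₀ then t else 0 := by
      apply Finsupp.sum_congr
      intro x _
      rw [map_smul]
      have : (psi (k := k) x₀).toLinearMap (FreeLieAlgebra.of k x)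
          = if x = x₀ then (1 : k) else 0 := by
        show psi (k := k) x₀ (FreeLieAlgebra.of k x) = _
        rw [psi, FreeLieAlgebra.lift_of_apply]
      rw [this]
      simp only [smul_eq_mul, mul_ite, mul_one, mul_zero]
    rw [heq, Finsupp.sum_ite_eq' c x₀ fun _ t => t] at h0
    by_cases hx : x₀ ∈ c.support
    · rwa [if_pos hx] at h0
    · exact Finsupp.notMem_support_iff.mp hx
  have : c = 0 := Finsupp.ext hc
  rw [this, Finsupp.sum_zero_index]

end Free

section AdPow

variable {k : Type*} [Field k]

open Polynomial

lemma lieHom_ad_pow {L g : Type*} [LieRing L] [LieAlgebra k L] [LieRing g] [LieAlgebra k g]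
    (f : L →ₗ⁅k⁆ g) (a z : L) (m : ℕ) :
    f (((LieAlgebra.ad k L a) ^ m) z) = ((LieAlgebra.ad k g (f a)) ^ m) (f z) := by
  induction m with
  | zero => simp
  | succ m ih =>
    rw [pow_succ', pow_succ', Module.End.mul_apply, Module.End.mul_apply,
      LieAlgebra.ad_apply, LieAlgebra.ad_apply, LieHom.map_lie, ih]

lemma wit_ad_pow (w : Wit k) (m : ℕ) :
    ((LieAlgebra.ad k (Wit k) w) ^ m) (((0 : k), (1 : Polynomial k)) : Wit k) =
      (((0 : k), w.1 ^ m • X ^ m) : Wit k) := by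
  induction m with
  | zero => simp; rfl
  | succ m ih =>
    rw [pow_succ']
    show LieAlgebra.ad k (Wit k) w (((LieAlgebra.ad k (Wit k) w) ^ m) (((0 : k), (1 : Polynomial k)) : Wit k)) = _
    rw [ih]
    refine Prod.ext rfl ?_
    show w.1 • (X * (w.1 ^ m • X ^ m)) - (0 : k) • (X * w.2) = w.1 ^ (m + 1) • X ^ (m + 1)
    simp only [smul_eq_C_mul, map_zero, map_pow, map_mul]
    ring

lemma wit_ad_pow_ne_zero (w : Wit k) (hw : w.1 ≠ 0) (m : ℕ) :
    ((LieAlgebra.ad k (Wit k) w) ^ m) (((0 : k), (1 : Polynomial k)) : Wit k) ≠ 0 := by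
  rw [wit_ad_pow]
  intro hcon
  have h2 : w.1 ^ m • (X : Polynomial k) ^ m = 0 := congrArg Prod.snd hcon
  exact smul_ne_zero (pow_ne_zero m hw) (pow_ne_zero m Polynomial.X_ne_zero) h2

end AdPow

section Main

variable {k : Type*} [Field k] {X : Type*} [Nontrivial X]

lemma nilpotent_le_derived (I : LieIdeal k (FreeMetabelianLie k X))
    (hI : LieRing.IsNilpotent I) :
    I ≤ LieAlgebra.derivedSeries k (FreeMetabelianLie k X) 1 := by
  classical
  intro a ha
  by_contra hna
  set L := FreeLieAlgebra k X with hL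
  set J : LieIdeal k L := LieAlgebra.derivedSeries k L 2 with hJ
  obtain ⟨aL, rfl⟩ := lieQuotMk_surjective J a
  have haL : aL ∉ LieAlgebra.derivedSeries k L 1 := by
    intro hmem
    apply hna
    have h1 := LieIdeal.mem_map (f := lieQuotMk J) hmem
    rwa [LieIdeal.derivedSeries_map_eq 1 (lieQuotMk_surjective J)] at h1
  obtain ⟨x₀, hc⟩ := exists_psi_ne_zero haL
  obtain ⟨y₀, hy⟩ := exists_ne x₀
  set e : Wit k := (((0 : k), (1 : Polynomial k)) : Wit k) with he
  set f : X → Wit k := fun x =>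
    if x = x₀ then (((1 : k), (0 : Polynomial k)) : Wit k)
    else if x = y₀ then (((0 : k), (1 : Polynomial k)) : Wit k) else 0 with hf
  set φ₀ : L →ₗ⁅k⁆ Wit k := FreeLieAlgebra.lift k f with hφ₀
  have hφ₀J : ∀ z ∈ J, φ₀ z = 0 := by
    intro z hz
    have h1 := LieIdeal.derivedSeries_map_le (f := φ₀) 2
    have h2 := h1 (LieIdeal.mem_map hz)
    rwa [wit_derived_two, LieSubmodule.mem_bot] at h2
  set φ : (L ⧸ J) →ₗ⁅k⁆ Wit k := lieQuotLift J φ₀ hφ₀J with hφ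
  -- first coordinate of φ₀ equals psi x₀
  have hfst : (fstHom k).comp φ₀ = psi (k := k) x₀ := by
    apply FreeLieAlgebra.hom_ext
    intro x
    rw [LieHom.comp_apply, hφ₀, FreeLieAlgebra.lift_of_apply, psi, FreeLieAlgebra.lift_of_apply, hf]
    by_cases h1 : x = x₀
    · show (fstHom k) (f x) = _
      rw [show f x = (((1 : k), (0 : Polynomial k)) : Wit k) from if_pos h1, if_pos h1]; rfl
    · by_cases h2 : x = y₀
      · show (fstHom k) (f x) = _
        rw [show f x = (((0 : k), (1 : Polynomial k)) : Wit k) from (if_neg h1).trans (if_pos h2),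
          if_neg h1]; rfl
      · show (fstHom k) (f x) = _
        rw [show f x = (0 : Wit k) from (if_neg h1).trans (if_neg h2), if_neg h1]
        exact wit_zero_fst
  have hwfst : (φ₀ aL).1 = psi (k := k) x₀ aL := by
    have := congrArg (fun (F : L →ₗ⁅k⁆ k) => F aL) hfst
    exact this
  -- the two elements
  set w : Wit k := φ₀ aL with hw
  have hw1 : w.1 ≠ 0 := by rw [hw, hwfst]; exact hc
  set b : L ⧸ J := lieQuotMk J (FreeLieAlgebra.of k y₀) with hb
  have hφb : φ b = e := by
    rw [hb, hφ, lieQuotLift_mk, hφ₀, FreeLieAlgebra.lift_of_apply, hf]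
    rw [he]
    simp [hy]; rfl
  -- nilpotency gives a bound
  haveI := hI
  obtain ⟨n, hn⟩ := LieAlgebra.nilpotent_ad_of_nilpotent_algebra k I
  set aq : L ⧸ J := lieQuotMk J aL with haq
  set b1 : L ⧸ J := ⁅aq, b⁆ with hb1def
  have hb1 : b1 ∈ I := by
    rw [hb1def, ← lie_skew, neg_mem_iff (G := L ⧸ J)]
    exact I.lie_mem ha
  -- iterates stay in I and eventually vanish
  have key : ∀ m : ℕ, (((LieAlgebra.ad k I ⟨aq, ha⟩) ^ m) ⟨b1, hb1⟩ : L ⧸ J) =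
      ((LieAlgebra.ad k (L ⧸ J) aq) ^ m) b1 := by
    intro m
    induction m with
    | zero => simp
    | succ m ih =>
      rw [pow_succ', pow_succ', Module.End.mul_apply, Module.End.mul_apply,
        LieAlgebra.ad_apply, LieAlgebra.ad_apply, ← ih]
      rfl
  have hvanish : ((LieAlgebra.ad k (L ⧸ J) aq) ^ n) b1 = 0 := by
    rw [← key n, hn ⟨aq, ha⟩]
    rfl
  -- but the image under φ is nonzero
  have hφaq : φ aq = w := rfl
  have hφb1 : φ b1 = LieAlgebra.ad k (Wit k) w e := by
    rw [hb1def, LieHom.map_lie, hφb, LieAlgebra.ad_apply, hφaq]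
  have himg : φ (((LieAlgebra.ad k (L ⧸ J) aq) ^ n) b1) =
      ((LieAlgebra.ad k (Wit k) w) ^ (n + 1)) e := by
    rw [lieHom_ad_pow, hφaq, hφb1, ← Module.End.mul_apply, ← pow_succ]
  rw [hvanish, map_zero] at himg
  exact wit_ad_pow_ne_zero w hw1 (n + 1) (by rw [← he]; exact himg.symm)

end Main

section Fitting

variable {k : Type*} [Field k] {X : Type*} [Nontrivial X]

omit [Nontrivial X] in
lemma derived_two_bot : LieAlgebra.derivedSeries k (FreeMetabelianLie k X) 2 = ⊥ := by
  rw [← LieIdeal.derivedSeries_map_eq 2 (lieQuotMk_surjective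
    (LieAlgebra.derivedSeries k (FreeLieAlgebra k X) 2)), LieIdeal.map_eq_bot_iff]
  intro x hx
  rw [LieHom.mem_ker, lieQuotMk_apply]
  exact (LieSubmodule.Quotient.mk_eq_zero _).mpr hx

omit [Nontrivial X] in
lemma derived_one_abelian : IsLieAbelian (LieAlgebra.derivedSeries k (FreeMetabelianLie k X) 1) := by
  rw [LieAlgebra.abelian_iff_derived_one_eq_bot,
    ← LieAlgebra.derivedSeriesOfIdeal_add (⊤ : LieIdeal k (FreeMetabelianLie k X)) 1 1]
  exact derived_two_bot

lemma derived_one_nilpotent :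
    LieRing.IsNilpotent (LieAlgebra.derivedSeries k (FreeMetabelianLie k X) 1) := by
  haveI := derived_one_abelian (k := k) (X := X)
  infer_instance

end Fitting

end FMAux

/-- The Fitting radical of a non-abelian free metabelian Lie algebra (on a type with at
least two elements) equals its derived ideal. -/
theorem fittingRadical_freeMetabelian {k X : Type*} [Field k] [Nontrivial X] :
    fittingRadical k (FreeMetabelianLie k X) =
      LieAlgebra.derivedSeries k (FreeMetabelianLie k X) 1 := by
  apply le_antisymm
  · exact sSup_le fun I hI => FMAux.nilpotent_le_derived I hI
  · exact le_sSup FMAux.derived_one_nilpotent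
end

section
/- Let k be a field, R = MvPolynomial σ k, and let T be an R-module with no zero smul divisors (torsion-free). Equip M = R × T with the matrix metabelian Lie bracket ⁅(f,u),(g,v)⁆ = (0, g•u − f•v). Let A be a Lie subalgebra of M that is not abelian. Then the Fitting radical of A (as a Lie algebra in its own right) consists exactly of the elements of A with zero first component: Fit(A) = { (f, u) ∈ A | f = 0 }. -/
section MatLie

variable (R T : Type*) [CommRing R] [AddCommGroup T] [Module R T]

/-- The matrix metabelian Lie ring structure on `R × T`:
`⁅(f,u),(g,v)⁆ = (0, g•u − f•v)`. -/
instance matLieRing : LieRing (R × T) where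
  bracket x y := (0, y.1 • x.2 - x.1 • y.2)
  add_lie x y z := by
    show (0, z.1 • (x.2 + y.2) - (x.1 + y.1) • z.2) =
      (0, z.1 • x.2 - x.1 • z.2) + (0, z.1 • y.2 - y.1 • z.2)
    ext
    · simp
    · simp only [smul_add, add_smul, Prod.snd_add]
      abel
  lie_add x y z := by
    show (0, (y.1 + z.1) • x.2 - x.1 • (y.2 + z.2)) =
      (0, y.1 • x.2 - x.1 • y.2) + (0, z.1 • x.2 - x.1 • z.2)
    ext
    · simp
    · simp only [smul_add, add_smul, Prod.snd_add]
      abel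
  lie_self x := by
    show (0, x.1 • x.2 - x.1 • x.2) = 0
    ext <;> simp
  leibniz_lie x y z := by
    show ((0:R), (0:R) • x.2 - x.1 • (z.1 • y.2 - y.1 • z.2)) =
      ((0:R), z.1 • (y.1 • x.2 - x.1 • y.2) - (0:R) • z.2) +
      ((0:R), (0:R) • y.2 - y.1 • (z.1 • x.2 - x.1 • z.2))
    ext
    · simp
    · simp only [smul_sub, smul_smul, mul_comm, zero_smul, Prod.snd_add]
      abel

variable (k : Type*) [CommRing k] [Algebra k R] [Module k T]
  [IsScalarTower k R T] [SMulCommClass k R T]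

/-- The matrix metabelian Lie algebra structure over `k` on `R × T`. -/
instance matLieAlgebra : LieAlgebra k (R × T) where
  lie_smul t x y := by
    show ((0:R), (t • y).1 • x.2 - x.1 • (t • y).2) = t • ((0:R), y.1 • x.2 - x.1 • y.2)
    ext
    · simp
    · show (t • y.1) • x.2 - x.1 • t • y.2 = t • (y.1 • x.2 - x.1 • y.2)
      rw [smul_sub, smul_assoc, smul_comm x.1 t y.2]

end MatLie

section Aux

variable {k σ T : Type*} [Field k] [AddCommGroup T]
    [Module (MvPolynomial σ k) T]
    [Module k T] [IsScalarTower k (MvPolynomial σ k) T]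
    [SMulCommClass k (MvPolynomial σ k) T]
    (A : LieSubalgebra k (MvPolynomial σ k × T))

/-- The set of elements of `A` with zero first component, as a Lie ideal of `A`. -/
def zeroFstIdeal : LieIdeal k ↥A where
  carrier := {x : ↥A | (x : MvPolynomial σ k × T).1 = 0}
  add_mem' := by
    intro a b ha hb
    show ((a : MvPolynomial σ k × T) + b).1 = 0
    simp only [Prod.fst_add]
    rw [Set.mem_setOf_eq] at ha hb
    rw [ha, hb, add_zero]
  zero_mem' := rfl
  smul_mem' := by
    intro c a ha
    show (c • (a : MvPolynomial σ k × T)).1 = 0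
    rw [Set.mem_setOf_eq] at ha
    show c • (a : MvPolynomial σ k × T).1 = 0
    rw [ha, smul_zero]
  lie_mem := by
    intro a b _
    show ((⁅a, b⁆ : ↥A) : MvPolynomial σ k × T).1 = 0
    rw [LieSubalgebra.coe_bracket]
    rfl

lemma mem_zeroFstIdeal (x : ↥A) :
    x ∈ zeroFstIdeal A ↔ (x : MvPolynomial σ k × T).1 = 0 := Iff.rfl

lemma zeroFstIdeal_abelian : IsLieAbelian ↥(zeroFstIdeal A) := by
  constructor
  intro x y
  have hx : ((x : ↥A) : MvPolynomial σ k × T).1 = 0 := x.2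
  have hy : ((y : ↥A) : MvPolynomial σ k × T).1 = 0 := y.2
  apply Subtype.ext
  apply Subtype.ext
  show ((((⁅x, y⁆ : ↥(zeroFstIdeal A)) : ↥A)) : MvPolynomial σ k × T) = 0
  have : (((⁅x, y⁆ : ↥(zeroFstIdeal A)) : ↥A) : MvPolynomial σ k × T)
      = ⁅((x : ↥A) : MvPolynomial σ k × T), ((y : ↥A) : MvPolynomial σ k × T)⁆ := rfl
  rw [this]
  show ((0 : MvPolynomial σ k),
    ((y : ↥A) : MvPolynomial σ k × T).1 • ((x : ↥A) : MvPolynomial σ k × T).2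
      - ((x : ↥A) : MvPolynomial σ k × T).1 • ((y : ↥A) : MvPolynomial σ k × T).2) = 0
  rw [hx, hy]
  simp
set_option linter.unusedSectionVars false

lemma nilpotent_ideal_le [NoZeroSMulDivisors (MvPolynomial σ k) T]
    (hnab : ¬ ∀ x y : ↥A, ⁅x, y⁆ = 0)
    (J : LieIdeal k ↥A) (hJ : LieRing.IsNilpotent ↥J) :
    J ≤ zeroFstIdeal A := by
  intro a ha
  rw [mem_zeroFstIdeal]
  by_contra hf
  push_neg at hnab
  obtain ⟨y, z, hyz⟩ := hnab
  set M := MvPolynomial σ k × T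
  set w : ↥A := ⁅y, z⁆ with hw
  have hw1 : (w : M).1 = 0 := by rw [hw, LieSubalgebra.coe_bracket]; rfl
  have hw2 : (w : M).2 ≠ 0 := by
    intro h
    apply hyz
    apply Subtype.ext
    show (w : M) = 0
    exact Prod.ext hw1 h
  set f : MvPolynomial σ k := (a : M).1 with hfdef
  set v : T := (w : M).2 with hvdef
  have hb0 : ⁅w, a⁆ ∈ J := J.lie_mem ha
  have hb0v : ((⁅w, a⁆ : ↥A) : M) = (0, f • v) := by
    rw [LieSubalgebra.coe_bracket]
    show ((0 : MvPolynomial σ k), (a : M).1 • (w : M).2 - (w : M).1 • (a : M).2) = (0, f • v)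
    rw [hw1, zero_smul, sub_zero]
  set x : ↥J := ⟨a, ha⟩ with hxdef
  set b : ↥J := ⟨⁅w, a⁆, hb0⟩ with hbdef
  obtain ⟨n, hn⟩ := LieModule.isNilpotent_toEnd_of_isNilpotent k ↥J ↥J x
  have key : ∀ m : ℕ, ((((LieModule.toEnd k ↥J ↥J x) ^ m) b : ↥A) : M)
      = (0, ((-f) ^ m * f) • v) := by
    intro m
    induction m with
    | zero => simpa [hbdef] using hb0v
    | succ m ih =>
      rw [pow_succ']
      rw [Module.End.mul_apply, LieModule.toEnd_apply_apply]
      set c := ((LieModule.toEnd k ↥J ↥J x) ^ m) b with hcdef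
      have hc : ((⁅x, c⁆ : ↥J) : ↥A) = ⁅(x : ↥A), (c : ↥A)⁆ := rfl
      rw [hc, LieSubalgebra.coe_bracket]
      show ((0 : MvPolynomial σ k),
        ((c : ↥A) : M).1 • ((x : ↥A) : M).2 - ((x : ↥A) : M).1 • ((c : ↥A) : M).2)
        = (0, ((-f) ^ (m + 1) * f) • v)
      have h1 : ((c : ↥A) : M).1 = 0 := by rw [ih]
      have h2 : ((c : ↥A) : M).2 = ((-f) ^ m * f) • v := by rw [ih]
      rw [h1, h2, zero_smul, zero_sub]
      have : ((x : ↥A) : M).1 = f := rfl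
      rw [this, smul_smul, ← neg_smul, ← neg_mul]
      ring_nf
  have hzero := key n
  rw [hn] at hzero
  simp only [LinearMap.zero_apply] at hzero
  have : ((-f) ^ n * f) • v = 0 := by
    have := congrArg Prod.snd hzero
    simpa using this.symm
  rcases smul_eq_zero.mp this with h | h
  · rcases mul_eq_zero.mp h with h' | h'
    · exact hf (neg_eq_zero.mp (pow_eq_zero_iff'.mp h').1)
    · exact hf h'
  · exact hw2 h

end Aux

/-- The Fitting radical of a non-abelian Lie subalgebra of a matrix metabelian Lie
algebra `R × T` (with `R = MvPolynomial σ k` and `T` torsion-free) consists exactly of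
the elements with zero first component. -/
theorem fittingRadical_matLie {k σ T : Type*} [Field k] [AddCommGroup T]
    [Module (MvPolynomial σ k) T] [NoZeroSMulDivisors (MvPolynomial σ k) T]
    [Module k T] [IsScalarTower k (MvPolynomial σ k) T]
    [SMulCommClass k (MvPolynomial σ k) T]
    (A : LieSubalgebra k (MvPolynomial σ k × T))
    (hnab : ¬ ∀ x y : A, ⁅x, y⁆ = 0) :
    ∀ x : A, x ∈ fittingRadical k ↥A ↔ (x : MvPolynomial σ k × T).1 = 0 := by
  intro x
  constructor
  · intro hx
    have hle : fittingRadical k ↥A ≤ zeroFstIdeal A :=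
      sSup_le fun J hJ => nilpotent_ideal_le A hnab J hJ
    exact hle hx
  · intro hx
    haveI : LieModule.IsTrivial ↥(zeroFstIdeal A) ↥(zeroFstIdeal A) :=
      ⟨fun a b => (zeroFstIdeal_abelian A).trivial a b⟩
    have hnil : LieRing.IsNilpotent ↥(zeroFstIdeal A) := inferInstance
    have h2 : zeroFstIdeal A ≤ fittingRadical k ↥A := le_sSup hnil
    exact h2 ((mem_zeroFstIdeal A x).mpr hx)
end

section
/- Let k be a field, R = MvPolynomial σ k, and let T be an R-module with no zero smul divisors (torsion-free). Equip M = R × T with the matrix metabelian Lie bracket ⁅(f,u),(g,v)⁆ = (0, g•u − f•v). Then for all x, y, z ∈ M: if ⁅x, y⁆ = 0, ⁅x, z⁆ = 0 and x ≠ 0, then ⁅y, z⁆ = 0. -/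
/-- In a matrix metabelian Lie algebra `R × T` with `R = MvPolynomial σ k` and `T`
torsion-free: if `⁅x,y⁆ = 0`, `⁅x,z⁆ = 0` and `x ≠ 0` then `⁅y,z⁆ = 0`. -/
theorem matLie_bracket_trans {k σ T : Type*} [Field k] [AddCommGroup T]
    [Module (MvPolynomial σ k) T] [NoZeroSMulDivisors (MvPolynomial σ k) T]
    (x y z : MvPolynomial σ k × T)
    (h1 : ⁅x, y⁆ = 0) (h2 : ⁅x, z⁆ = 0) (hx : x ≠ 0) :
    ⁅y, z⁆ = 0 := by
  have b1 : y.1 • x.2 - x.1 • y.2 = 0 := congrArg Prod.snd h1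
  have b2 : z.1 • x.2 - x.1 • z.2 = 0 := congrArg Prod.snd h2
  have e1 : y.1 • x.2 = x.1 • y.2 := sub_eq_zero.mp b1
  have e2 : z.1 • x.2 = x.1 • z.2 := sub_eq_zero.mp b2
  show ((0 : MvPolynomial σ k), z.1 • y.2 - y.1 • z.2) = 0
  have key : z.1 • y.2 - y.1 • z.2 = 0 := by
    by_cases hx1 : x.1 = 0
    · have hx2 : x.2 ≠ 0 := by
        intro hx2
        exact hx (Prod.ext hx1 hx2)
      have hy1 : y.1 = 0 := by
        rw [hx1, zero_smul] at e1
        rcases smul_eq_zero.mp e1 with h | h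
        · exact h
        · exact absurd h hx2
      have hz1 : z.1 = 0 := by
        rw [hx1, zero_smul] at e2
        rcases smul_eq_zero.mp e2 with h | h
        · exact h
        · exact absurd h hx2
      simp [hy1, hz1]
    · have : x.1 • (z.1 • y.2 - y.1 • z.2) = 0 := by
        rw [smul_sub, smul_comm x.1 z.1, ← e1, smul_comm x.1 y.1, ← e2,
          smul_comm z.1 y.1]
        simp
      rcases smul_eq_zero.mp this with h | h
      · exact absurd h hx1
      · exact h
  rw [key]
  rfl
end

section
/- Let k be a field, let σ be a nonempty type, and let R = MvPolynomial σ k. Let s : ℕ and let v₁, …, vₘ be finitely many nonzero elements of the free R-module Fin s → R. Let T₁ be a nontrivial torsion-free R-module generated by a single element. Then there exists an R-linear map φ : (Fin s → R) →ₗ[R] T₁ such that φ(vⱼ) ≠ 0 for every j = 1, …, m. (The free module of rank s is discriminated by a one-generated torsion-free R-module.) -/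
open MvPolynomial

/-- Key combinatorial lemma: if all `p i` have total degree `< D` and some `p i ≠ 0`,
then `∑ i, X i₀ ^ (D * i) * p i ≠ 0`. -/
lemma aux_sum_ne_zero {k σ : Type*} [Field k] (i₀ : σ) {s : ℕ}
    (p : Fin s → MvPolynomial σ k) (hp : p ≠ 0) (D : ℕ)
    (hD : ∀ i, (p i).totalDegree < D) :
    ∑ i : Fin s, (X i₀ : MvPolynomial σ k) ^ (D * (i : ℕ)) * p i ≠ 0 := by
  classical
  obtain ⟨i₁, hi₁'⟩ := Function.ne_iff.mp hp
  have hi₁ : p i₁ ≠ 0 := by simpa using hi₁'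
  set S : Finset (Fin s) := Finset.univ.filter fun i => p i ≠ 0 with hSdef
  have hS : S.Nonempty := ⟨i₁, by simp [hSdef, hi₁]⟩
  set I : Fin s := S.max' hS with hIdef
  have hpI : p I ≠ 0 := by
    have := S.max'_mem hS
    simpa [hSdef] using this
  have hmax : ∀ i : Fin s, p i ≠ 0 → i ≤ I := fun i hi =>
    S.le_max' i (by simp [hSdef, hi])
  obtain ⟨d, hd⟩ := (support_nonempty.mpr hpI)
  intro hsum
  have hcoeff : coeff (Finsupp.single i₀ (D * (I : ℕ)) + d)
      (∑ i : Fin s, (X i₀ : MvPolynomial σ k) ^ (D * (i : ℕ)) * p i) = coeff d (p I) := by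
    rw [coeff_sum]
    rw [Finset.sum_eq_single I]
    · rw [X_pow_eq_monomial, coeff_monomial_mul, one_mul]
    · intro i _ hiI
      by_cases hpi : p i = 0
      · simp [hpi]
      · have hiltI : (i : ℕ) < (I : ℕ) := by
          have := hmax i hpi
          exact lt_of_le_of_ne (by exact_mod_cast this) (by simpa using (Fin.val_ne_iff).mpr hiI)
        have hle : D * (i : ℕ) ≤ D * (I : ℕ) := Nat.mul_le_mul_left D hiltI.le
        have hsplit : Finsupp.single i₀ (D * (I : ℕ)) + d
            = Finsupp.single i₀ (D * (i : ℕ))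
              + (Finsupp.single i₀ (D * (I : ℕ) - D * (i : ℕ)) + d) := by
          rw [← add_assoc, ← Finsupp.single_add, Nat.add_sub_cancel' hle]
        rw [hsplit, X_pow_eq_monomial, coeff_monomial_mul, one_mul]
        apply coeff_eq_zero_of_totalDegree_lt
        have hdeg : ∑ j ∈ (Finsupp.single i₀ (D * (I : ℕ) - D * (i : ℕ)) + d).support,
            (Finsupp.single i₀ (D * (I : ℕ) - D * (i : ℕ)) + d) j
            = (D * (I : ℕ) - D * (i : ℕ)) + ∑ j ∈ d.support, d j := by
          have : ∀ e : σ →₀ ℕ, (∑ j ∈ e.support, e j) = e.sum fun _ n => n := fun _ => rfl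
          rw [this, this, Finsupp.sum_add_index' (fun _ => rfl) (fun _ _ _ => rfl),
            Finsupp.sum_single_index rfl]
        rw [hdeg]
        have hDle : D ≤ D * (I : ℕ) - D * (i : ℕ) := by
          have h2 : D * ((i : ℕ) + 1) ≤ D * (I : ℕ) := Nat.mul_le_mul_left D hiltI
          rw [Nat.mul_succ] at h2
          omega
        exact lt_of_lt_of_le (hD i) (le_trans hDle (Nat.le_add_right _ _))
    · intro h; exact absurd (Finset.mem_univ I) h
  rw [hsum] at hcoeff
  exact (mem_support_iff.mp hd) hcoeff.symm

/-- The free module of rank `s` over `R = MvPolynomial σ k` (`σ` nonempty) is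
discriminated by any nontrivial cyclic torsion-free `R`-module `T₁`: for finitely many
nonzero vectors `vⱼ` there is an `R`-linear map `φ` to `T₁` with `φ(vⱼ) ≠ 0` for all `j`. -/
theorem free_module_discriminated_by_cyclic {k σ : Type*} [Field k] [Nonempty σ]
    (s m : ℕ) (v : Fin m → (Fin s → MvPolynomial σ k)) (hv : ∀ j, v j ≠ 0)
    (T₁ : Type*) [AddCommGroup T₁] [Module (MvPolynomial σ k) T₁] [Nontrivial T₁]
    [NoZeroSMulDivisors (MvPolynomial σ k) T₁]
    (hcyc : ∃ t : T₁, Submodule.span (MvPolynomial σ k) {t} = ⊤) :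
    ∃ φ : (Fin s → MvPolynomial σ k) →ₗ[MvPolynomial σ k] T₁, ∀ j, φ (v j) ≠ 0 := by
  classical
  obtain ⟨t, ht⟩ := hcyc
  have ht0 : t ≠ 0 := by
    rintro rfl
    rw [Submodule.span_zero_singleton] at ht
    exact absurd ht bot_ne_top
  obtain ⟨i₀⟩ := ‹Nonempty σ›
  obtain ⟨D, hD⟩ : ∃ D : ℕ, ∀ j i, (v j i).totalDegree < D :=
    ⟨(Finset.univ.sup fun ji : Fin m × Fin s => (v ji.1 ji.2).totalDegree) + 1, fun j i =>
      Nat.lt_succ_of_le (Finset.le_sup (f := fun ji : Fin m × Fin s => (v ji.1 ji.2).totalDegree)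
        (Finset.mem_univ (j, i)))⟩
  let f : (Fin s → MvPolynomial σ k) →ₗ[MvPolynomial σ k] MvPolynomial σ k :=
    ∑ i : Fin s, ((X i₀ : MvPolynomial σ k) ^ (D * (i : ℕ))) • LinearMap.proj i
  have hf : ∀ x : Fin s → MvPolynomial σ k, f x = ∑ i : Fin s, (X i₀ : MvPolynomial σ k) ^ (D * (i : ℕ)) * x i := by
    intro x
    simp [f, LinearMap.sum_apply, LinearMap.smul_apply, smul_eq_mul]
  refine ⟨(LinearMap.toSpanSingleton (MvPolynomial σ k) T₁ t).comp f, fun j => ?_⟩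
  have hfv : f (v j) ≠ 0 := by
    rw [hf]
    exact aux_sum_ne_zero i₀ (v j) (hv j) D (hD j)
  simpa [LinearMap.toSpanSingleton_apply] using smul_ne_zero hfv ht0
end

section
/- Let k be a field and let A be a finitely generated metabelian Lie algebra over k whose Fitting radical Fit(A) is abelian. Suppose a₁, …, a_r ∈ A are elements whose images form a basis of the quotient k-vector space A / Fit(A), and let R = MvPolynomial (Fin r) k act on Fit(A) by evaluating polynomials at the pairwise commuting k-linear endomorphisms b ↦ ⁅b, aᵢ⁆ of Fit(A) (this R-module structure is well defined because A is metabelian and Fit(A) is an abelian ideal containing ⁅A, A⁆). Assume this R-module Fit(A) is torsion-free: f • b ≠ 0 whenever f ∈ R and b ∈ Fit(A) are both nonzero. Then there exist s : ℕ and an injective Lie algebra homomorphism γ : A → R × (Fin s → R), where R × (Fin s → R) carries the matrix metabelian Lie bracket ⁅(f,u),(g,v)⁆ = (0, g•u − f•v), such that for every a ∈ A the first component of γ(a) is a k-linear combination of the variables X₁, …, X_r (a homogeneous polynomial of degree one with zero constant term). -/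
open Submodule Set in
lemma aux_li_fin_cons {R M : Type*} [CommRing R] [AddCommGroup M] [Module R M]
    {s : ℕ} {v : Fin s → M} (li : LinearIndependent R v) {x : M}
    (hx : ∀ c : R, c ≠ 0 → c • x ∉ span R (range v)) :
    LinearIndependent R (Fin.cons x v : Fin (s+1) → M) := by
  rw [Fintype.linearIndependent_iff]
  intro c hc
  rw [Fin.sum_univ_succ] at hc
  simp only [Fin.cons_zero, Fin.cons_succ] at hc
  have h0 : c 0 = 0 := by
    by_contra h0
    apply hx (c 0) h0
    have : c 0 • x = -∑ i : Fin s, c i.succ • v i := by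
      rw [eq_neg_iff_add_eq_zero]; exact hc
    rw [this]
    exact neg_mem (Submodule.sum_mem _ fun i _ =>
      Submodule.smul_mem _ _ (subset_span (mem_range_self i)))
  rw [h0, zero_smul, zero_add] at hc
  have := Fintype.linearIndependent_iff.mp li (fun i => c i.succ) hc
  intro i
  refine Fin.cases h0 (fun j => this j) i

open Submodule Set in
lemma aux_embed {R M : Type*} [CommRing R] [IsDomain R] [AddCommGroup M] [Module R M]
    (htf : ∀ (f : R) (b : M), f ≠ 0 → b ≠ 0 → f • b ≠ 0)
    {n : ℕ} (g : Fin n → M) (hg : Submodule.span R (Set.range g) = ⊤) :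
    ∃ (s : ℕ) (ι : M →ₗ[R] (Fin s → R)), Function.Injective ι := by
  have key : ∀ (m : ℕ) (f : Fin m → M), ∃ (s : ℕ) (v : Fin s → M),
      LinearIndependent R v ∧ ∃ h : R, h ≠ 0 ∧ ∀ i, h • f i ∈ span R (range v) := by
    intro m
    induction m with
    | zero =>
      intro f
      exact ⟨0, Fin.elim0, linearIndependent_empty_type, 1, one_ne_zero, fun i => i.elim0⟩
    | succ m ih =>
      intro f
      obtain ⟨s, v, li, h, hh, hmem⟩ := ih (fun i => f i.succ)
      by_cases hcase : ∃ c : R, c ≠ 0 ∧ c • f 0 ∈ span R (range v)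
      · obtain ⟨c, hc, hmem0⟩ := hcase
        refine ⟨s, v, li, h * c, mul_ne_zero hh hc, fun i => ?_⟩
        refine Fin.cases ?_ (fun j => ?_) i
        · rw [mul_smul]
          exact Submodule.smul_mem _ _ hmem0
        · rw [mul_comm, mul_smul]
          exact Submodule.smul_mem _ _ (hmem j)
      · push_neg at hcase
        refine ⟨s + 1, Fin.cons (f 0) v, aux_li_fin_cons li (fun c hc => hcase c hc), h, hh,
          fun i => ?_⟩
        have hsub : span R (range v) ≤ span R (range (Fin.cons (f 0) v : Fin (s+1) → M)) := by
          apply span_mono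
          intro y hy
          obtain ⟨j, rfl⟩ := hy
          exact ⟨j.succ, by simp⟩
        refine Fin.cases ?_ (fun j => hsub (hmem j)) i
        exact Submodule.smul_mem _ _ (subset_span ⟨0, by simp⟩)
  obtain ⟨s, v, li, h, hh, hmem⟩ := key n g
  have hall : ∀ x : M, h • x ∈ span R (range v) := by
    intro x
    have hx : x ∈ span R (range g) := hg ▸ mem_top
    obtain ⟨c, rfl⟩ := (mem_span_range_iff_exists_fun R).mp hx
    rw [Finset.smul_sum]
    refine Submodule.sum_mem _ fun i _ => ?_
    rw [smul_comm]
    exact Submodule.smul_mem _ _ (hmem i)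
  let b : Module.Basis (Fin s) R (span R (range v)) := Module.Basis.span li
  let ψ : M →ₗ[R] span R (range v) :=
    LinearMap.codRestrict _ (LinearMap.lsmul R M h) hall
  refine ⟨s, b.equivFun.toLinearMap.comp ψ, ?_⟩
  intro x y hxy
  have : ψ x = ψ y := b.equivFun.injective (by simpa using hxy)
  have h2 : h • x = h • y := congrArg Subtype.val this
  by_contra hne
  exact htf h (x - y) hh (sub_ne_zero.mpr hne) (by rw [smul_sub, h2, sub_self])

set_option maxHeartbeats 2000000 in
/-- Every finitely generated metabelian Lie `U`-algebra embeds into a matrix metabelian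
Lie algebra `R × (Fin s → R)`, with first components of the images being `k`-linear
combinations of the variables. -/
theorem fg_U_algebra_embeds_matLie {k A : Type*} [Field k] [LieRing A] [LieAlgebra k A]
    (hA : IsMetabelian A)
    (hfg : ∃ S : Finset A, LieSubalgebra.lieSpan k A ↑S = ⊤)
    (habel : ∀ x ∈ fittingRadical k A, ∀ y ∈ fittingRadical k A, ⁅x, y⁆ = 0)
    (r : ℕ) (a : Fin r → A)
    (bas : Module.Basis (Fin r) k (A ⧸ fittingRadical k A))
    (hbas : ∀ i, bas i = LieSubmodule.Quotient.mk' (fittingRadical k A) (a i))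
    [inst : Module (MvPolynomial (Fin r) k) ↥(fittingRadical k A)]
    (hX : ∀ (i : Fin r) (b : ↥(fittingRadical k A)),
      (((MvPolynomial.X i : MvPolynomial (Fin r) k) • b : ↥(fittingRadical k A)) : A) = ⁅(b : A), a i⁆)
    (hC : ∀ (c : k) (b : ↥(fittingRadical k A)),
      ((MvPolynomial.C c : MvPolynomial (Fin r) k) • b : ↥(fittingRadical k A)) = c • b)
    (htf : ∀ (f : MvPolynomial (Fin r) k) (b : ↥(fittingRadical k A)),
      f ≠ 0 → b ≠ 0 → f • b ≠ 0) :
    ∃ (s : ℕ)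
      (γ : A →ₗ⁅k⁆ (MvPolynomial (Fin r) k × (Fin s → MvPolynomial (Fin r) k))),
      Function.Injective γ ∧
      ∀ x : A, (γ x).1 ∈
        Submodule.span k (Set.range (MvPolynomial.X : Fin r → MvPolynomial (Fin r) k)) := by
  classical
  obtain ⟨S, hS⟩ := hfg
  -- Step A : all brackets lie in the Fitting radical
  have hFitBr : ∀ x y : A, ⁅x, y⁆ ∈ fittingRadical k A := by
    set I : LieIdeal k A := ⁅(⊤ : LieIdeal k A), (⊤ : LieIdeal k A)⁆ with hI0
    set sset : Set A := {m : A | ∃ (x : (⊤ : LieIdeal k A)) (n : (⊤ : LieSubmodule k A A)),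
      ⁅(x : A), (n : A)⁆ = m} with hs0
    have hmem : ∀ z : A, z ∈ I → z ∈ Submodule.span k sset := by
      intro z hz
      rw [← LieSubmodule.mem_toSubmodule, LieSubmodule.lieIdeal_oper_eq_linear_span] at hz
      exact hz
    have hbil : ∀ x ∈ Submodule.span k sset, ∀ y ∈ Submodule.span k sset, ⁅x, y⁆ = (0 : A) := by
      intro x hx y hy
      induction hx, hy using Submodule.span_induction₂ with
      | mem_mem u v hu hv =>
        obtain ⟨p, q, rfl⟩ := hu
        obtain ⟨p', q', rfl⟩ := hv
        exact hA p q p' q'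
      | zero_left => simp
      | zero_right => simp
      | add_left u v w _ _ _ h1 h2 => rw [add_lie, h1, h2, add_zero]
      | add_right u v w _ _ _ h1 h2 => rw [lie_add, h1, h2, add_zero]
      | smul_left c u v _ _ h1 => rw [smul_lie, h1, smul_zero]
      | smul_right c u v _ _ h1 => rw [lie_smul, h1, smul_zero]
    intro x y
    have hI : LieRing.IsNilpotent I := by
      haveI : IsLieAbelian I := by
        constructor
        intro u v
        ext
        exact hbil u (hmem _ u.2) v (hmem _ v.2)
      infer_instance
    have hle : I ≤ fittingRadical k A := le_sSup hI
    exact hle (LieSubmodule.lie_mem_lie (LieSubmodule.mem_top x) (LieSubmodule.mem_top y))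
  -- scalar tower
  haveI hTower : IsScalarTower k (MvPolynomial (Fin r) k) ↥(fittingRadical k A) := by
    constructor
    intro c f b
    rw [MvPolynomial.smul_eq_C_mul, mul_smul, hC]
  -- the projection and coordinates
  set π := LieSubmodule.Quotient.mk' (fittingRadical k A) with hπ
  set co : A → Fin r → k := fun x i => bas.repr (π x) i with hco
  have hπl : ∀ x : A, π x = π.toLinearMap x := fun _ => rfl
  have hco_mem : ∀ x : A, x - ∑ i, co x i • a i ∈ fittingRadical k A := by
    intro x
    rw [← LieSubmodule.Quotient.mk_eq_zero]
    have hkey : π (x - ∑ i, co x i • a i) = π x - ∑ i, co x i • bas i := by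
      rw [hπl, map_sub, map_sum]
      congr 1
      refine Finset.sum_congr rfl fun i _ => ?_
      rw [map_smul, hbas, hπl]
    rw [show (LieSubmodule.Quotient.mk' (fittingRadical k A)) (x - ∑ i, co x i • a i)
        = π (x - ∑ i, co x i • a i) from rfl, hkey, hco]
    simp only []
    rw [Module.Basis.sum_repr bas (π x), sub_self]
  set fitp : A → ↥(fittingRadical k A) := fun x => ⟨x - ∑ i, co x i • a i, hco_mem x⟩ with hfitp
  set lam : A → MvPolynomial (Fin r) k := fun x => ∑ i, co x i • MvPolynomial.X i with hlam
  have hdec : ∀ z : A, z = (∑ i, co z i • a i) + ↑(fitp z) := by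
    intro z; simp [hfitp]
  -- basic linearity facts
  have hco_add : ∀ x y : A, co (x + y) = co x + co y := by
    intro x y; funext i; simp [hco, π.map_add, map_add]
  have hco_smul : ∀ (c : k) (x : A), co (c • x) = c • co x := by
    intro c x; funext i; simp [hco, π.map_smul, map_smul]
  have hco_lie : ∀ x y : A, co ⁅x, y⁆ = 0 := by
    intro x y; funext i
    have : π ⁅x, y⁆ = 0 := (LieSubmodule.Quotient.mk_eq_zero _).mpr (hFitBr x y)
    simp [hco, this]
  have hfitp_add : ∀ x y : A, fitp (x + y) = fitp x + fitp y := by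
    intro x y
    apply Subtype.ext
    show (x + y) - ∑ i, co (x+y) i • a i = (x - ∑ i, co x i • a i) + (y - ∑ i, co y i • a i)
    rw [hco_add]
    simp only [Pi.add_apply, add_smul, Finset.sum_add_distrib]
    abel
  have hfitp_smul : ∀ (c : k) (x : A), fitp (c • x) = c • fitp x := by
    intro c x
    apply Subtype.ext
    show (c • x) - ∑ i, co (c • x) i • a i = c • (x - ∑ i, co x i • a i)
    rw [hco_smul]
    simp only [Pi.smul_apply, smul_eq_mul, mul_smul, smul_sub, Finset.smul_sum]
  -- the workhorse identity
  have hC1 : ∀ (b : ↥(fittingRadical k A)) (x : A), ⁅(b : A), x⁆ = ((lam x • b :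
      ↥(fittingRadical k A)) : A) := by
    intro b x
    conv_lhs => rw [hdec x]
    rw [lie_add]
    have h0 : ⁅(b : A), ((fitp x : A))⁆ = 0 := habel _ b.2 _ (fitp x).2
    have h1 : ⁅(b : A), ∑ i, co x i • a i⁆ = ∑ i, co x i • ⁅(b : A), a i⁆ := by
      simp only [← LieAlgebra.ad_apply (R := k)]
      rw [map_sum]
      simp [map_smul]
    rw [h0, h1, add_zero]
    have h2 : ∀ i ∈ Finset.univ, co x i • ⁅(b : A), a i⁆
        = ((co x i • ((MvPolynomial.X i : MvPolynomial (Fin r) k) • b) :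
          ↥(fittingRadical k A)) : A) := by
      intro i _
      rw [← hX i b, ← LieSubmodule.coe_smul]
    rw [Finset.sum_congr rfl h2, ← AddSubmonoidClass.coe_finset_sum]
    apply congrArg
    rw [hlam]
    simp only []
    rw [Finset.sum_smul]
    exact Finset.sum_congr rfl fun i _ => (smul_assoc (co x i) (MvPolynomial.X i) b).symm
  have expand : ∀ (q : A) (cc : Fin r → k),
      ⁅q, ∑ i, cc i • a i⁆ = ∑ i, cc i • ⁅q, a i⁆ := by
    intro q cc
    simp only [← LieAlgebra.ad_apply (R := k)]
    rw [map_sum]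
    simp [map_smul]
  have hbilin : ∀ (cc dd : Fin r → k), ⁅∑ i, cc i • a i, ∑ j, dd j • a j⁆
      = ∑ i, ∑ j, (cc i * dd j) • ⁅a i, a j⁆ := by
    intro cc dd
    rw [← lie_skew, expand, ← Finset.sum_neg_distrib]
    refine Finset.sum_congr rfl fun i _ => ?_
    rw [← smul_neg, lie_skew, expand (a i) dd, Finset.smul_sum]
    exact Finset.sum_congr rfl fun j _ => smul_smul (cc i) (dd j) _
  -- finite generation of the Fitting radical as an R-module
  set W : Fin r → Fin r → ↥(fittingRadical k A) := fun i j => ⟨⁅a i, a j⁆, hFitBr _ _⟩ with hW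
  set G : Set ↥(fittingRadical k A) :=
    Set.range (fun p : Fin r × Fin r => W p.1 p.2) ∪ Set.range (fun s : {x // x ∈ S} => fitp ↑s)
    with hG
  set N : Submodule (MvPolynomial (Fin r) k) ↥(fittingRadical k A) :=
    Submodule.span (MvPolynomial (Fin r) k) G with hN
  have hFG : ∀ u : ↥(fittingRadical k A), u ∈ N := by
    set NA : Submodule k A := (N.restrictScalars k).map
      ((fittingRadical k A : Submodule k A).subtype) with hNA0
    set B0 : Submodule k A := Submodule.span k (Set.range a) ⊔ NA with hB0
    have hNA : ∀ m : ↥(fittingRadical k A), m ∈ N → (m : A) ∈ B0 :=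
      fun m hm => Submodule.mem_sup_right ⟨m, hm, rfl⟩
    have hWmem : ∀ i j, (⁅a i, a j⁆ : A) ∈ B0 := fun i j =>
      hNA (W i j) (Submodule.subset_span (Or.inl ⟨(i, j), rfl⟩))
    have key1 : ∀ (m : ↥(fittingRadical k A)), m ∈ N →
        ∀ v ∈ Submodule.span k (Set.range a), ⁅(m : A), v⁆ ∈ B0 := by
      intro m hm v hv
      obtain ⟨c, rfl⟩ := (Submodule.mem_span_range_iff_exists_fun k).mp hv
      have hexp : ⁅(m : A), ∑ i, c i • a i⁆
          = ∑ i, c i • (((MvPolynomial.X i : MvPolynomial (Fin r) k) • m :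
            ↥(fittingRadical k A)) : A) := by
        simp only [← LieAlgebra.ad_apply (R := k)]
        rw [map_sum]
        simp only [map_smul, LieAlgebra.ad_apply]
        exact Finset.sum_congr rfl fun i _ => by rw [hX]
      rw [hexp]
      exact Submodule.sum_mem _ fun i _ =>
        Submodule.smul_mem _ _ (hNA _ (N.smul_mem _ hm))
    have key2 : ∀ v ∈ Submodule.span k (Set.range a), ∀ w ∈ Submodule.span k (Set.range a),
        ⁅v, w⁆ ∈ B0 := by
      intro v hv w hw
      obtain ⟨c, rfl⟩ := (Submodule.mem_span_range_iff_exists_fun k).mp hv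
      obtain ⟨d, rfl⟩ := (Submodule.mem_span_range_iff_exists_fun k).mp hw
      rw [hbilin c d]
      exact Submodule.sum_mem _ fun i _ => Submodule.sum_mem _ fun j _ =>
        Submodule.smul_mem _ _ (hWmem i j)
    have hB0lie : ∀ x ∈ B0, ∀ y ∈ B0, ⁅x, y⁆ ∈ B0 := by
      intro x hx y hy
      obtain ⟨v, hv, n, hn, hx'⟩ := Submodule.mem_sup.mp hx
      obtain ⟨w, hw, n', hn', hy'⟩ := Submodule.mem_sup.mp hy
      obtain ⟨m, hm, hmn⟩ := hn
      obtain ⟨m', hm', hmn'⟩ := hn'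
      have hxe : x = v + (m : A) := by rw [← hx', ← hmn]; rfl
      have hye : y = w + (m' : A) := by rw [← hy', ← hmn']; rfl
      rw [hxe, hye, add_lie, lie_add, lie_add]
      have h1 : ⁅v, w⁆ ∈ B0 := key2 v hv w hw
      have h2 : ⁅v, (m' : A)⁆ ∈ B0 := by
        rw [← lie_skew]
        exact neg_mem (key1 m' hm' v hv)
      have h3 : ⁅(m : A), w⁆ ∈ B0 := key1 m hm w hw
      have h4 : ⁅(m : A), (m' : A)⁆ = (0 : A) := habel _ m.2 _ m'.2
      rw [h4]
      exact add_mem (add_mem h1 h2) (add_mem h3 (zero_mem _))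
    set B : LieSubalgebra k A :=
      { toSubmodule := B0, lie_mem' := fun hx hy => hB0lie _ hx _ hy } with hB
    have hStop : ∀ x : A, x ∈ B0 := by
      have hle : LieSubalgebra.lieSpan k A ↑S ≤ B := by
        rw [LieSubalgebra.lieSpan_le]
        intro t ht
        show t ∈ B0
        have : t = (∑ i, co t i • a i) + ↑(fitp t) := hdec t
        rw [this]
        refine add_mem ?_ ?_
        · exact Submodule.mem_sup_left (Submodule.sum_mem _ fun i _ =>
            Submodule.smul_mem _ _ (Submodule.subset_span (Set.mem_range_self i)))
        · exact hNA _ (Submodule.subset_span (Or.inr ⟨⟨t, ht⟩, rfl⟩))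
      intro x
      have : x ∈ LieSubalgebra.lieSpan k A ↑S := hS ▸ LieSubalgebra.mem_top x
      exact hle this
    intro u
    obtain ⟨v, hv, n, hn, hvn⟩ := Submodule.mem_sup.mp (hStop ↑u)
    obtain ⟨m, hm, rfl⟩ := hn
    obtain ⟨c, rfl⟩ := (Submodule.mem_span_range_iff_exists_fun k).mp hv
    have hvn2 : (∑ i, c i • a i : A) + ↑m = ↑u := by rw [← hvn]; rfl
    have hvF : (∑ i, c i • a i : A) ∈ fittingRadical k A := by
      have he : (∑ i, c i • a i : A) = ↑u - ↑m := by
        rw [eq_sub_iff_add_eq, hvn2]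
      rw [he]
      exact sub_mem u.2 m.2
    have hc0 : ∀ i, c i = 0 := by
      have hz : π (∑ i, c i • a i) = 0 := (LieSubmodule.Quotient.mk_eq_zero _).mpr hvF
      have hz2 : (∑ i, c i • bas i : A ⧸ fittingRadical k A) = 0 := by
        rw [← hz, hπl, map_sum]
        exact Finset.sum_congr rfl fun i _ => by rw [map_smul, hbas, hπl]
      exact Fintype.linearIndependent_iff.mp bas.linearIndependent c hz2
    have : (∑ i, c i • a i : A) = 0 := by
      rw [Finset.sum_congr rfl fun i _ => by rw [hc0 i, zero_smul]]
      simp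
    have hum : (u : A) = ↑m := by rw [← hvn2, this, zero_add]
    have : u = m := Subtype.ext hum
    rw [this]
    exact hm
  -- embed the Fitting radical into a finite free module
  obtain ⟨s, ι, hι⟩ : ∃ (s : ℕ) (ι : ↥(fittingRadical k A) →ₗ[MvPolynomial (Fin r) k]
      (Fin s → MvPolynomial (Fin r) k)), Function.Injective ι := by
    set g : ((Fin r × Fin r) ⊕ {x // x ∈ S}) → ↥(fittingRadical k A) :=
      Sum.elim (fun p => W p.1 p.2) (fun s => fitp ↑s) with hg
    have hrange : Set.range g = G := Set.Sum.elim_range _ _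
    set e := Fintype.equivFin ((Fin r × Fin r) ⊕ {x // x ∈ S}) with he
    apply aux_embed htf (g ∘ e.symm)
    rw [Set.range_comp, e.symm.range_eq_univ, Set.image_univ, hrange]
    rw [eq_top_iff]
    exact fun u _ => hFG u
  have hιk : ∀ (c : k) (m : ↥(fittingRadical k A)), ι (c • m) = c • ι m := by
    intro c m
    rw [← hC, map_smul, ← MvPolynomial.algebraMap_eq, algebraMap_smul]
  rcases Nat.eq_zero_or_pos r with hr | hr
  · -- degenerate case : A equals its Fitting radical
    haveI : IsEmpty (Fin r) := by rw [hr]; infer_instance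
    have hFtop : ∀ x : A, x ∈ fittingRadical k A := by
      intro x
      have := hco_mem x
      simpa using this
    have hbr0 : ∀ x y : A, ⁅x, y⁆ = (0 : A) := fun x y => habel x (hFtop x) y (hFtop y)
    refine ⟨s, { toFun := fun x => ((0 : MvPolynomial (Fin r) k), ι ⟨x, hFtop x⟩),
                 map_add' := ?_, map_smul' := ?_, map_lie' := ?_ }, ?_, ?_⟩
    · intro x y
      refine Prod.ext ?_ ?_
      · simp
      · show ι ⟨x + y, hFtop _⟩ = ((0 : MvPolynomial (Fin r) k), ι ⟨x, hFtop x⟩).2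
          + ((0 : MvPolynomial (Fin r) k), ι ⟨y, hFtop y⟩).2
        rw [show (⟨x + y, hFtop _⟩ : ↥(fittingRadical k A))
            = ⟨x, hFtop x⟩ + ⟨y, hFtop y⟩ from rfl, map_add]
    · intro c x
      refine Prod.ext ?_ ?_
      · simp
      · show ι ⟨c • x, hFtop _⟩ = c • ι ⟨x, hFtop x⟩
        rw [show (⟨c • x, hFtop _⟩ : ↥(fittingRadical k A))
            = c • ⟨x, hFtop x⟩ from rfl, hιk]
    · intro x y
      show ((0 : MvPolynomial (Fin r) k), ι ⟨⁅x, y⁆, hFtop _⟩)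
        = ((0 : MvPolynomial (Fin r) k),
            (0 : MvPolynomial (Fin r) k) • ι ⟨x, hFtop x⟩
              - (0 : MvPolynomial (Fin r) k) • ι ⟨y, hFtop y⟩)
      rw [show (⟨⁅x, y⁆, hFtop _⟩ : ↥(fittingRadical k A)) = 0 from Subtype.ext (hbr0 x y),
        map_zero]
      simp
    · intro x y h
      have h2 := congrArg Prod.snd h
      have h3 : (⟨x, hFtop x⟩ : ↥(fittingRadical k A)) = ⟨y, hFtop y⟩ := hι h2
      exact congrArg Subtype.val h3
    · intro x
      exact Submodule.zero_mem _
  · -- main case : r > 0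
    set i0 : Fin r := ⟨0, hr⟩ with hi0
    set τ : Fin r → (Fin s → MvPolynomial (Fin r) k) := fun i => ι (W i i0) with hτ
    have hJ : ∀ i j, (MvPolynomial.X i0 : MvPolynomial (Fin r) k) • W i j
        = (MvPolynomial.X j : MvPolynomial (Fin r) k) • W i i0
          - (MvPolynomial.X i : MvPolynomial (Fin r) k) • W j i0 := by
      intro i j
      apply Subtype.ext
      rw [hX i0 (W i j), LieSubmodule.coe_sub, hX j (W i i0), hX i (W j i0)]
      show ⁅⁅a i, a j⁆, a i0⁆ = ⁅⁅a i, a i0⁆, a j⁆ - ⁅⁅a j, a i0⁆, a i⁆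
      rw [lie_lie, show ⁅⁅a i, a i0⁆, a j⁆ = -⁅a j, ⁅a i, a i0⁆⁆ from
          (lie_skew ⁅a i, a i0⁆ (a j)).symm, show ⁅⁅a j, a i0⁆, a i⁆ = -⁅a i, ⁅a j, a i0⁆⁆ from
          (lie_skew ⁅a j, a i0⁆ (a i)).symm]
      abel
    have hK1 : ∀ x y : A, (⟨⁅x, y⁆, hFitBr x y⟩ : ↥(fittingRadical k A))
        = (∑ i, ∑ j, (co x i * co y j) • W i j) + lam y • fitp x - lam x • fitp y := by
      intro x y
      apply Subtype.ext
      rw [LieSubmodule.coe_sub, LieSubmodule.coe_add, ← hC1 (fitp x) y, ← hC1 (fitp y) x]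
      rw [AddSubmonoidClass.coe_finset_sum]
      have hcoe : ∀ i ∈ Finset.univ, ((∑ j, (co x i * co y j) • W i j :
          ↥(fittingRadical k A)) : A) = ∑ j, (co x i * co y j) • ⁅a i, a j⁆ := by
        intro i _
        rw [AddSubmonoidClass.coe_finset_sum]
        exact Finset.sum_congr rfl fun j _ => LieSubmodule.coe_smul _ _ _
      rw [Finset.sum_congr rfl hcoe]
      -- now a pure identity in A
      show ⁅x, y⁆ = ∑ i, ∑ j, (co x i * co y j) • ⁅a i, a j⁆
        + ⁅((fitp x : A)), y⁆ - ⁅((fitp y : A)), x⁆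
      have h4 : ⁅((fitp x : A)), ((fitp y : A))⁆ = 0 := habel _ (fitp x).2 _ (fitp y).2
      have e2 : ⁅∑ i, co x i • a i, ((fitp y : A))⁆ = -⁅((fitp y : A)), x⁆ := by
        rw [← lie_skew]
        have : ⁅((fitp y : A)), ∑ i, co x i • a i⁆ = ⁅((fitp y : A)), x⁆ := by
          conv_rhs => rw [hdec x]
          rw [lie_add, habel _ (fitp y).2 _ (fitp x).2, add_zero]
        rw [this]
      have e3 : ⁅((fitp x : A)), ∑ j, co y j • a j⁆ = ⁅((fitp x : A)), y⁆ := by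
        conv_rhs => rw [hdec y]
        rw [lie_add, h4, add_zero]
      conv_lhs => rw [hdec x, hdec y]
      rw [add_lie, lie_add, lie_add, h4, add_zero, hbilin (co x) (co y), e2, e3]
      abel
    -- pointwise smul juggling
    have hpt : ∀ (c d : k) (f g : MvPolynomial (Fin r) k)
        (u v : Fin s → MvPolynomial (Fin r) k),
        (c * d) • (f • u - g • v) = (d • f) • (c • u) - (c • g) • (d • v) := by
      intro c d f g u v
      rw [smul_sub]
      congr 1
      · rw [smul_assoc, smul_comm f c u, mul_smul, smul_comm c d (f • u)]
      · rw [smul_assoc, smul_comm g d v, mul_smul]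
    have hsum : ∀ (cc dd : Fin r → k),
        (∑ i, ∑ j, (cc i * dd j) • ((MvPolynomial.X j : MvPolynomial (Fin r) k) • τ i
          - (MvPolynomial.X i : MvPolynomial (Fin r) k) • τ j))
        = (∑ j, dd j • (MvPolynomial.X j : MvPolynomial (Fin r) k)) • (∑ i, cc i • τ i)
          - (∑ i, cc i • (MvPolynomial.X i : MvPolynomial (Fin r) k))
            • (∑ j, dd j • τ j) := by
      intro cc dd
      rw [Finset.sum_smul, Finset.sum_smul]
      simp only [Finset.smul_sum]
      rw [Finset.sum_comm (s := Finset.univ) (t := Finset.univ)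
        (f := fun j i => (dd j • (MvPolynomial.X j : MvPolynomial (Fin r) k)) • (cc i • τ i))]
      rw [← Finset.sum_sub_distrib]
      refine Finset.sum_congr rfl fun i _ => ?_
      rw [← Finset.sum_sub_distrib]
      exact Finset.sum_congr rfl fun j _ => hpt (cc i) (dd j) _ _ _ _
    set μ : A → (Fin s → MvPolynomial (Fin r) k) := fun x =>
      (MvPolynomial.X i0 : MvPolynomial (Fin r) k) • ι (fitp x) + ∑ i, co x i • τ i with hμ
    have hμ_add : ∀ x y : A, μ (x + y) = μ x + μ y := by
      intro x y
      simp only [hμ, hfitp_add, map_add, smul_add, hco_add, Pi.add_apply, add_smul,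
        Finset.sum_add_distrib]
      abel
    have hμ_smul : ∀ (c : k) (x : A), μ (c • x) = c • μ x := by
      intro c x
      simp only [hμ, hfitp_smul, hιk, hco_smul, Pi.smul_apply, smul_eq_mul, mul_smul,
        smul_add, Finset.smul_sum]
      rw [smul_comm (MvPolynomial.X i0 : MvPolynomial (Fin r) k) c]
    have hlam_add : ∀ x y : A, lam (x + y) = lam x + lam y := by
      intro x y
      simp only [hlam, hco_add, Pi.add_apply, add_smul, Finset.sum_add_distrib]
    have hlam_smul : ∀ (c : k) (x : A), lam (c • x) = c • lam x := by
      intro c x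
      simp only [hlam, hco_smul, Pi.smul_apply, smul_eq_mul, mul_smul, Finset.smul_sum]
    have hlam_lie : ∀ x y : A, lam ⁅x, y⁆ = 0 := by
      intro x y
      simp [hlam, hco_lie]
    have hμ_lie : ∀ x y : A, μ ⁅x, y⁆ = lam y • μ x - lam x • μ y := by
      intro x y
      have hfl : fitp ⁅x, y⁆ = ⟨⁅x, y⁆, hFitBr x y⟩ := by
        apply Subtype.ext
        show ⁅x, y⁆ - ∑ i, co ⁅x, y⁆ i • a i = ⁅x, y⁆
        simp [hco_lie]
      have h0 : μ ⁅x, y⁆ = (MvPolynomial.X i0 : MvPolynomial (Fin r) k)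
          • ι (⟨⁅x, y⁆, hFitBr x y⟩ : ↥(fittingRadical k A)) := by
        rw [hμ]
        simp only [hco_lie, Pi.zero_apply, zero_smul, Finset.sum_const_zero, add_zero, hfl]
      rw [h0, hK1 x y]
      rw [map_sub, map_add, map_smul, map_smul]
      have hms : ι (∑ i, ∑ j, (co x i * co y j) • W i j)
          = ∑ i, ∑ j, (co x i * co y j) • ι (W i j) := by
        rw [map_sum]
        refine Finset.sum_congr rfl fun i _ => ?_
        rw [map_sum]
        exact Finset.sum_congr rfl fun j _ => hιk _ _
      rw [hms]
      rw [smul_sub, smul_add, Finset.smul_sum]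
      have hterm : ∀ i ∈ Finset.univ, (MvPolynomial.X i0 : MvPolynomial (Fin r) k)
          • (∑ j, (co x i * co y j) • ι (W i j))
          = ∑ j, (co x i * co y j) • ((MvPolynomial.X j : MvPolynomial (Fin r) k) • τ i
            - (MvPolynomial.X i : MvPolynomial (Fin r) k) • τ j) := by
        intro i _
        rw [Finset.smul_sum]
        refine Finset.sum_congr rfl fun j _ => ?_
        rw [smul_comm, ← map_smul, hJ i j, map_sub, map_smul, map_smul]
      rw [Finset.sum_congr rfl hterm, hsum (co x) (co y)]
      -- unfold μ and lam on the right-hand side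
      rw [hμ]
      simp only []
      rw [smul_add, smul_add, smul_comm (lam y) (MvPolynomial.X i0 : MvPolynomial (Fin r) k),
        smul_comm (lam x) (MvPolynomial.X i0 : MvPolynomial (Fin r) k)]
      rw [hlam]
      simp only []
      abel
    refine ⟨s, { toFun := fun x => (lam x, μ x),
                 map_add' := ?_, map_smul' := ?_, map_lie' := ?_ }, ?_, ?_⟩
    · intro x y
      refine Prod.ext ?_ ?_
      · exact hlam_add x y
      · exact hμ_add x y
    · intro c x
      refine Prod.ext ?_ ?_
      · exact hlam_smul c x
      · exact hμ_smul c x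
    · intro x y
      show (lam ⁅x, y⁆, μ ⁅x, y⁆) = ((0 : MvPolynomial (Fin r) k),
        lam y • μ x - lam x • μ y)
      rw [hlam_lie x y, hμ_lie x y]
    · -- injectivity
      intro x y h
      have h1 : lam x = lam y := congrArg Prod.fst h
      have h2 : μ x = μ y := congrArg Prod.snd h
      have hcoeq : co x = co y := by
        funext i
        have hcoeff : ∀ u : A, MvPolynomial.coeff (Finsupp.single i 1) (lam u) = co u i := by
          intro u
          rw [hlam]
          simp only []
          rw [MvPolynomial.coeff_sum]
          have hterm : ∀ j ∈ Finset.univ, MvPolynomial.coeff (Finsupp.single i 1)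
              (co u j • MvPolynomial.X j) = if j = i then co u j else 0 := by
            intro j _
            rw [MvPolynomial.coeff_smul, MvPolynomial.coeff_X']
            by_cases hji : j = i
            · subst hji; simp
            · rw [if_neg (fun hh => hji ((Finsupp.single_left_inj one_ne_zero).mp hh)),
                if_neg hji, smul_zero]
          rw [Finset.sum_congr rfl hterm]
          simp
        rw [← hcoeff x, ← hcoeff y, h1]
      have h3 : fitp x = fitp y := by
        have hμ2 : (MvPolynomial.X i0 : MvPolynomial (Fin r) k) • ι (fitp x)
            = (MvPolynomial.X i0 : MvPolynomial (Fin r) k) • ι (fitp y) := by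
          have := h2
          rw [hμ] at this
          simp only [hcoeq] at this
          exact add_right_cancel this
        have h4 : ι ((MvPolynomial.X i0 : MvPolynomial (Fin r) k) • (fitp x - fitp y)) = 0 := by
          rw [map_smul, map_sub, smul_sub, hμ2, sub_self]
        have h5 : (MvPolynomial.X i0 : MvPolynomial (Fin r) k) • (fitp x - fitp y) = 0 := by
          apply hι
          rw [h4, map_zero]
        by_contra hne
        exact htf _ _ (MvPolynomial.X_ne_zero i0) (sub_ne_zero.mpr hne) h5
      calc x = ∑ i, co x i • a i + ↑(fitp x) := hdec x
        _ = ∑ i, co y i • a i + ↑(fitp y) := by rw [hcoeq, h3]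
        _ = y := (hdec y).symm
    · intro x
      show lam x ∈ _
      rw [hlam]
      exact Submodule.sum_mem _ fun i _ =>
        Submodule.smul_mem _ _ (Submodule.subset_span (Set.mem_range_self i))
end

section
/- Let k be a field and let A be a metabelian Lie algebra over k generated as a Lie algebra by n elements s₁, …, sₙ. Then: (i) the quotient k-vector space A / ⁅A, A⁆ is finite-dimensional, of dimension r ≤ n; and (ii) if a₁, …, a_r ∈ A are elements whose images form a basis of A / ⁅A, A⁆, then the derived ideal ⁅A, A⁆, viewed as a module over R = MvPolynomial (Fin r) k via evaluating polynomials at the pairwise commuting k-linear endomorphisms b ↦ ⁅b, aᵢ⁆ of ⁅A, A⁆ (well defined because A is metabelian, so ⁅A, A⁆ is an abelian ideal), is a finitely generated R-module. -/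
section AuxLemmas

variable {k A : Type*} [Field k] [LieRing A] [LieAlgebra k A]

lemma lie_mem_derived' (x y : A) : ⁅x, y⁆ ∈ LieAlgebra.derivedSeries k A 1 := by
  rw [LieAlgebra.derivedSeries_def, LieAlgebra.derivedSeriesOfIdeal_succ,
    LieAlgebra.derivedSeriesOfIdeal_zero]
  exact LieSubmodule.lie_mem_lie (LieSubmodule.mem_top x) (LieSubmodule.mem_top y)

lemma derived_le_of_lie_mem' {p : Submodule k A} (h : ∀ x y : A, ⁅x, y⁆ ∈ p) :
    ∀ m ∈ LieAlgebra.derivedSeries k A 1, m ∈ p := by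
  intro m hm
  rw [LieAlgebra.derivedSeries_def, LieAlgebra.derivedSeriesOfIdeal_succ,
    LieAlgebra.derivedSeriesOfIdeal_zero] at hm
  rw [← LieSubmodule.mem_toSubmodule, LieSubmodule.lieIdeal_oper_eq_linear_span'] at hm
  refine Submodule.span_le.mpr ?_ hm
  rintro _ ⟨x, -, y, -, rfl⟩
  exact h x y

lemma metab_inner (hA : IsMetabelian A) (c d : A) :
    ∀ m ∈ LieAlgebra.derivedSeries k A 1, ⁅⁅c, d⁆, m⁆ = 0 := by
  intro m hm
  have := derived_le_of_lie_mem' (p := LinearMap.ker (LieAlgebra.ad k A ⁅c, d⁆))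
    (fun x y => by simpa [LieAlgebra.ad_apply] using hA c d x y) m hm
  simpa [LieAlgebra.ad_apply] using this

lemma metab_zero (hA : IsMetabelian A) {m m' : A}
    (hm : m ∈ LieAlgebra.derivedSeries k A 1) (hm' : m' ∈ LieAlgebra.derivedSeries k A 1) :
    ⁅m, m'⁆ = 0 := by
  have h := derived_le_of_lie_mem' (p := LinearMap.ker (LieAlgebra.ad k A m'))
    (fun x y => by
      have h1 : ⁅⁅x, y⁆, m'⁆ = 0 := metab_inner hA x y m' hm'
      have h2 : ⁅m', ⁅x, y⁆⁆ = 0 := by rw [← lie_skew, h1, neg_zero]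
      simpa [LieAlgebra.ad_apply] using h2) m hm
  have h3 : ⁅m', m⁆ = 0 := by simpa [LieAlgebra.ad_apply] using h
  rw [← lie_skew, h3, neg_zero]


end AuxLemmas

/-- For a metabelian Lie algebra `A` generated by `n` elements: (i) `A/⁅A,A⁆` is a
finite-dimensional vector space of dimension at most `n`, and (ii) the derived ideal
`⁅A,A⁆`, as a module over `R = MvPolynomial (Fin r) k` via bracketing with preimages of a
basis of `A/⁅A,A⁆`, is a finitely generated `R`-module. -/
theorem derived_fg_module_of_fg_metabelian {k A : Type*} [Field k] [LieRing A]
    [LieAlgebra k A] (hA : IsMetabelian A) (n : ℕ) (s : Fin n → A)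
    (hgen : LieSubalgebra.lieSpan k A (Set.range s) = ⊤) :
    (FiniteDimensional k (A ⧸ LieAlgebra.derivedSeries k A 1) ∧
      Module.finrank k (A ⧸ LieAlgebra.derivedSeries k A 1) ≤ n) ∧
    (∀ (r : ℕ) (a : Fin r → A)
      (bas : Module.Basis (Fin r) k (A ⧸ LieAlgebra.derivedSeries k A 1)),
      (∀ i, bas i = LieSubmodule.Quotient.mk' (LieAlgebra.derivedSeries k A 1) (a i)) →
      ∀ [inst : Module (MvPolynomial (Fin r) k) ↥(LieAlgebra.derivedSeries k A 1)],
      (∀ (i : Fin r) (b : ↥(LieAlgebra.derivedSeries k A 1)),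
        (((MvPolynomial.X i : MvPolynomial (Fin r) k) • b : ↥(LieAlgebra.derivedSeries k A 1)) : A) = ⁅(b : A), a i⁆) →
      (∀ (c : k) (b : ↥(LieAlgebra.derivedSeries k A 1)),
        ((MvPolynomial.C c : MvPolynomial (Fin r) k) • b : ↥(LieAlgebra.derivedSeries k A 1)) = c • b) →
      Module.Finite (MvPolynomial (Fin r) k) ↥(LieAlgebra.derivedSeries k A 1)) := by
  constructor
  · -- Part (i)
    set I := LieAlgebra.derivedSeries k A 1 with hI
    set q := LieSubmodule.Quotient.mk' I with hq
    have hspan : Submodule.span k (Set.range fun t => q (s t)) = ⊤ := by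
      set T : Set (A ⧸ I) := Set.range fun t => q (s t) with hT
      set P : Submodule k A := (Submodule.span k T).comap I.toSubmodule.mkQ with hP
      have hIP : ∀ m ∈ I, m ∈ P := by
        intro m hm
        have : I.toSubmodule.mkQ m = 0 := (Submodule.Quotient.mk_eq_zero _).mpr hm
        have : I.toSubmodule.mkQ m ∈ Submodule.span k T := by
          rw [this]; exact (Submodule.span k T).zero_mem
        exact this
      have hlie : ∀ {x y : A}, x ∈ P → y ∈ P → ⁅x, y⁆ ∈ P :=
        fun {x y} _ _ => hIP _ (lie_mem_derived' x y)
      let S : LieSubalgebra k A := { P with lie_mem' := hlie }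
      have hsS : Set.range s ⊆ S := by
        rintro _ ⟨t, rfl⟩
        show I.toSubmodule.mkQ (s t) ∈ Submodule.span k T
        exact Submodule.subset_span ⟨t, rfl⟩
      have hS : S = ⊤ := top_unique (hgen ▸ (LieSubalgebra.lieSpan_le.mpr hsS))
      have hPtop : P = ⊤ := by
        rw [eq_top_iff]; intro x _
        have hx : x ∈ S := by rw [hS]; trivial
        exact hx
      rw [eq_top_iff]; intro z _
      obtain ⟨x, rfl⟩ := I.toSubmodule.mkQ_surjective z
      have hx : x ∈ P := by rw [hPtop]; trivial
      exact hx
    have fd : FiniteDimensional k (A ⧸ I) :=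
      ⟨Submodule.fg_def.mpr ⟨_, Set.finite_range _, hspan⟩⟩
    refine ⟨fd, ?_⟩
    simpa using finrank_le_of_span_eq_top hspan
  · -- Part (ii)
    intro r a bas hbas inst hX hC
    classical
    let q : A →ₗ[k] A ⧸ LieAlgebra.derivedSeries k A 1 :=
      (LieAlgebra.derivedSeries k A 1).toSubmodule.mkQ
    have hqa : ∀ i, q (a i) = bas i := fun i => (hbas i).symm
    have hu : ∀ t, s t - ∑ i, bas.repr (q (s t)) i • a i ∈ LieAlgebra.derivedSeries k A 1 := by
      intro t
      rw [← LieSubmodule.Quotient.mk_eq_zero]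
      show q _ = 0
      rw [map_sub, map_sum]
      simp_rw [map_smul, hqa]
      rw [bas.sum_repr (q (s t)), sub_self]
    let uI : Fin n → ↥(LieAlgebra.derivedSeries k A 1) := fun t => ⟨_, hu t⟩
    let wI : Fin r × Fin r → ↥(LieAlgebra.derivedSeries k A 1) :=
      fun p => ⟨⁅a p.1, a p.2⁆, lie_mem_derived' _ _⟩
    let S : Set ↥(LieAlgebra.derivedSeries k A 1) := Set.range uI ∪ Set.range wI
    let M : Submodule (MvPolynomial (Fin r) k) ↥(LieAlgebra.derivedSeries k A 1) :=
      Submodule.span (MvPolynomial (Fin r) k) S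
    let MA : Submodule k A := {
      carrier := Subtype.val '' (M : Set ↥(LieAlgebra.derivedSeries k A 1))
      add_mem' := by rintro x y ⟨m, hm, rfl⟩ ⟨m', hm', rfl⟩; exact ⟨m + m', M.add_mem hm hm', rfl⟩
      zero_mem' := ⟨0, M.zero_mem, rfl⟩
      smul_mem' := by
        rintro c x ⟨m, hm, rfl⟩
        refine ⟨c • m, ?_, by simp⟩
        rw [← hC c m]
        exact Submodule.smul_mem M (MvPolynomial.C c) hm }
    have hMA_mem : ∀ (m : ↥(LieAlgebra.derivedSeries k A 1)), m ∈ M → (m : A) ∈ MA :=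
      fun m hm => ⟨m, hm, rfl⟩
    have hMA_le_I : ∀ x ∈ MA, x ∈ LieAlgebra.derivedSeries k A 1 := by
      rintro x ⟨m, hm, rfl⟩; exact m.2
    have hSM : ∀ z ∈ S, z ∈ M := fun z hz => Submodule.subset_span hz
    have hMA_lie_a : ∀ (i : Fin r), ∀ x ∈ MA, ⁅x, a i⁆ ∈ MA := by
      rintro i x ⟨m, hm, rfl⟩
      exact ⟨MvPolynomial.X i • m, Submodule.smul_mem M (MvPolynomial.X i) hm, hX i m⟩
    have ha_lie_MA : ∀ (i : Fin r), ∀ x ∈ MA, ⁅a i, x⁆ ∈ MA := by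
      intro i x hx
      rw [← lie_skew]
      exact MA.neg_mem (hMA_lie_a i x hx)
    let PA : Submodule k A := Submodule.span k (Set.range a)
    have hPA_lie_MA : ∀ p ∈ PA, ∀ x ∈ MA, ⁅p, x⁆ ∈ MA := by
      intro p hp x hx
      induction hp using Submodule.span_induction with
      | mem y hy => obtain ⟨i, rfl⟩ := hy; exact ha_lie_MA i x hx
      | zero => rw [zero_lie]; exact MA.zero_mem
      | add y z _ _ hy hz => rw [add_lie]; exact MA.add_mem hy hz
      | smul c y _ hy => rw [smul_lie]; exact MA.smul_mem c hy
    have hMA_lie_PA : ∀ x ∈ MA, ∀ p ∈ PA, ⁅x, p⁆ ∈ MA := by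
      intro x hx p hp
      rw [← lie_skew]
      exact MA.neg_mem (hPA_lie_MA p hp x hx)
    have hPA_lie_a : ∀ (j : Fin r), ∀ p ∈ PA, ⁅p, a j⁆ ∈ MA := by
      intro j p hp
      induction hp using Submodule.span_induction with
      | mem y hy =>
          obtain ⟨i, rfl⟩ := hy
          exact ⟨wI (i, j), hSM _ (Or.inr ⟨(i, j), rfl⟩), rfl⟩
      | zero => rw [zero_lie]; exact MA.zero_mem
      | add y z _ _ hy hz => rw [add_lie]; exact MA.add_mem hy hz
      | smul c y _ hy => rw [smul_lie]; exact MA.smul_mem c hy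
    have hPA_lie_PA : ∀ p ∈ PA, ∀ p' ∈ PA, ⁅p, p'⁆ ∈ MA := by
      intro p hp p' hp'
      induction hp' using Submodule.span_induction with
      | mem y hy => obtain ⟨j, rfl⟩ := hy; exact hPA_lie_a j p hp
      | zero => rw [lie_zero]; exact MA.zero_mem
      | add y z _ _ hy hz => rw [lie_add]; exact MA.add_mem hy hz
      | smul c y _ hy => rw [lie_smul]; exact MA.smul_mem c hy
    have hMA_lie_MA : ∀ x ∈ MA, ∀ y ∈ MA, ⁅x, y⁆ ∈ MA := by
      intro x hx y hy
      rw [metab_zero hA (hMA_le_I x hx) (hMA_le_I y hy)]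
      exact MA.zero_mem
    let B : Submodule k A := PA ⊔ MA
    have hBB : ∀ x ∈ B, ∀ y ∈ B, ⁅x, y⁆ ∈ MA := by
      intro x hx y hy
      obtain ⟨p, hp, m, hm, rfl⟩ := Submodule.mem_sup.mp hx
      obtain ⟨p', hp', m', hm', rfl⟩ := Submodule.mem_sup.mp hy
      rw [add_lie, lie_add, lie_add]
      exact MA.add_mem (MA.add_mem (hPA_lie_PA _ hp _ hp') (hPA_lie_MA _ hp _ hm'))
        (MA.add_mem (hMA_lie_PA _ hm _ hp') (hMA_lie_MA _ hm _ hm'))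
    have hsB : ∀ t, s t ∈ B := by
      intro t
      have h1 : (uI t : A) ∈ MA := hMA_mem _ (hSM _ (Or.inl ⟨t, rfl⟩))
      have h2 : (∑ i, bas.repr (q (s t)) i • a i) ∈ PA :=
        Submodule.sum_mem _ fun i _ => Submodule.smul_mem _ _ (Submodule.subset_span ⟨i, rfl⟩)
      have h3 : s t = (∑ i, bas.repr (q (s t)) i • a i) + (uI t : A) := by
        show s t = _ + (s t - ∑ i, bas.repr (q (s t)) i • a i)
        abel
      rw [h3]
      exact B.add_mem (Submodule.mem_sup_left h2) (Submodule.mem_sup_right h1)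
    have hBlie : ∀ {x y : A}, x ∈ B → y ∈ B → ⁅x, y⁆ ∈ B :=
      fun hx hy => Submodule.mem_sup_right (hBB _ hx _ hy)
    let SB : LieSubalgebra k A := { B with lie_mem' := hBlie }
    have hSBtop : SB = ⊤ :=
      top_unique (hgen ▸ LieSubalgebra.lieSpan_le.mpr (by rintro _ ⟨t, rfl⟩; exact hsB t))
    have hBtop : ∀ x : A, x ∈ B := by
      intro x
      have hx : x ∈ SB := by rw [hSBtop]; trivial
      exact hx
    have hIMA : ∀ z ∈ LieAlgebra.derivedSeries k A 1, z ∈ MA :=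
      derived_le_of_lie_mem' (fun x y => hBB x (hBtop x) y (hBtop y))
    refine ⟨Submodule.fg_def.mpr ⟨S, (Set.finite_range uI).union (Set.finite_range wI), ?_⟩⟩
    rw [eq_top_iff]
    rintro m -
    obtain ⟨m', hm', hval⟩ := hIMA (m : A) m.2
    have hmm : m' = m := Subtype.ext hval
    exact hmm ▸ hm'
end
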